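/- arXiv:1712.08546 — 10 statements merged into one kernel-verified Lean document; each statement's English description precedes it below -/
import Mathlib

section
/- Let I and K be finite index sets, a an I×K complex matrix, d a K×I complex matrix, and L the block anti-diagonal matrix [[0, a],[d, 0]] on I ⊕ K. Then det(1 + L) equals the sum, over all pairs of subsets S₊ ⊆ I, S₋ ⊆ K with |S₊| = |S₋|, of (−1)^{|S₊|} · det(a restricted to rows S₊ and columns S₋) · det(d restricted to rows S₋ and columns S₊). -/
open Matrix Finset

/-- det of a square block anti-diagonal matrix over `Fin n ⊕ Fin n`. -/
private lemma aux_det_fromBlocks_antidiag {n : ℕ} (A D : Matrix (Fin n) (Fin n) ℂ) :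
    (Matrix.fromBlocks 0 A D 0).det = (-1 : ℂ) ^ n * A.det * D.det := by
  have hJ : (Matrix.fromBlocks (0 : Matrix (Fin n) (Fin n) ℂ) (1 : Matrix (Fin n) (Fin n) ℂ) (-1) 0).det = 1 := by
    have hfac : Matrix.fromBlocks (0 : Matrix (Fin n) (Fin n) ℂ) (1 : Matrix (Fin n) (Fin n) ℂ) (-1) 0 =
        Matrix.fromBlocks (1 : Matrix (Fin n) (Fin n) ℂ) (1 : Matrix (Fin n) (Fin n) ℂ) (0 : Matrix (Fin n) (Fin n) ℂ) (1 : Matrix (Fin n) (Fin n) ℂ) *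
          Matrix.fromBlocks (1 : Matrix (Fin n) (Fin n) ℂ) (0 : Matrix (Fin n) (Fin n) ℂ) (-1 : Matrix (Fin n) (Fin n) ℂ) (1 : Matrix (Fin n) (Fin n) ℂ) *
          Matrix.fromBlocks (1 : Matrix (Fin n) (Fin n) ℂ) (1 : Matrix (Fin n) (Fin n) ℂ) (0 : Matrix (Fin n) (Fin n) ℂ) (1 : Matrix (Fin n) (Fin n) ℂ) := by
      simp [Matrix.fromBlocks_multiply]
    rw [hfac, Matrix.det_mul, Matrix.det_mul, Matrix.det_fromBlocks_zero₂₁,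
      Matrix.det_fromBlocks_zero₁₂]
    simp
  have hfac : Matrix.fromBlocks (0 : Matrix (Fin n) (Fin n) ℂ) A D 0 =
      Matrix.fromBlocks (0 : Matrix (Fin n) (Fin n) ℂ) (1 : Matrix (Fin n) (Fin n) ℂ) (-1 : Matrix (Fin n) (Fin n) ℂ) (0 : Matrix (Fin n) (Fin n) ℂ) * Matrix.fromBlocks (-D) (0 : Matrix (Fin n) (Fin n) ℂ) (0 : Matrix (Fin n) (Fin n) ℂ) A := by
    simp [Matrix.fromBlocks_multiply]
  rw [hfac, Matrix.det_mul, hJ, one_mul, Matrix.det_fromBlocks_zero₂₁, Matrix.det_neg]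
  simp [Fintype.card_fin]
  ring

/-- det of a block anti-diagonal matrix vanishes if the blocks are not balanced. -/
private lemma aux_det_fromBlocks_antidiag_ne {P Q : Type*} [Fintype P] [Fintype Q]
    [DecidableEq P] [DecidableEq Q]
    (h : Fintype.card P ≠ Fintype.card Q) (A : Matrix P Q ℂ) (D : Matrix Q P ℂ) :
    (Matrix.fromBlocks 0 A D 0).det = 0 := by
  rw [Matrix.det_apply]
  refine Finset.sum_eq_zero fun σ _ => ?_
  have hprod : (∏ i, Matrix.fromBlocks 0 A D 0 (σ i) i) = 0 := by
    by_contra hp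
    have hne : ∀ i, Matrix.fromBlocks 0 A D 0 (σ i) i ≠ 0 := by
      intro i hi
      exact hp (Finset.prod_eq_zero (Finset.mem_univ i) hi)
    have hφ : ∀ x : P, ∃ y : Q, σ (Sum.inl x) = Sum.inr y := by
      intro x
      rcases hy : σ (Sum.inl x) with y | y
      · exfalso
        apply hne (Sum.inl x)
        rw [hy]
        simp
      · exact ⟨y, rfl⟩
    have hψ : ∀ y : Q, ∃ x : P, σ (Sum.inr y) = Sum.inl x := by
      intro y
      rcases hx : σ (Sum.inr y) with x | x
      · exact ⟨x, rfl⟩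
      · exfalso
        apply hne (Sum.inr y)
        rw [hx]
        simp
    choose φ hφ' using hφ
    choose ψ hψ' using hψ
    have hinjφ : Function.Injective φ := by
      intro x₁ x₂ hx
      have : σ (Sum.inl x₁) = σ (Sum.inl x₂) := by rw [hφ', hφ', hx]
      simpa using σ.injective this
    have hinjψ : Function.Injective ψ := by
      intro y₁ y₂ hy
      have : σ (Sum.inr y₁) = σ (Sum.inr y₂) := by rw [hψ', hψ', hy]
      simpa using σ.injective this
    exact h (le_antisymm (Fintype.card_le_of_injective φ hinjφ)
      (Fintype.card_le_of_injective ψ hinjψ))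
  rw [hprod, smul_zero]

/-- The natural equivalence `↥s ⊕ ↥t ≃ ↥(s.disjSum t)`. -/
private def auxDisjSumEquiv {α β : Type*} (s : Finset α) (t : Finset β) :
    (↥s ⊕ ↥t) ≃ ↥(s.disjSum t) where
  toFun := Sum.elim (fun i => ⟨Sum.inl i.1, Finset.inl_mem_disjSum.2 i.2⟩)
                    (fun k => ⟨Sum.inr k.1, Finset.inr_mem_disjSum.2 k.2⟩)
  invFun := fun x => match x with
    | ⟨Sum.inl i, h⟩ => Sum.inl ⟨i, Finset.inl_mem_disjSum.1 h⟩
    | ⟨Sum.inr k, h⟩ => Sum.inr ⟨k, Finset.inr_mem_disjSum.1 h⟩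
  left_inv := by rintro (⟨i, hi⟩ | ⟨k, hk⟩) <;> rfl
  right_inv := by rintro ⟨(i | k), h⟩ <;> rfl

/-- det of a piecewise matrix (rows from `M` on `s`, identity rows elsewhere)
equals the principal minor of `M` on `s`. -/
private lemma aux_det_piecewise_one {n : Type*} [Fintype n] [DecidableEq n]
    (M : Matrix n n ℂ) (s : Finset n) :
    (Matrix.of (s.piecewise (M : n → n → ℂ) (1 : Matrix n n ℂ))).det =
      (M.submatrix (Subtype.val : {x // x ∈ s} → n) Subtype.val).det := by
  classical
  let e : {x // x ∈ s} ⊕ {x // ¬ x ∈ s} ≃ n := Equiv.sumCompl _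
  rw [← Matrix.det_submatrix_equiv_self e]
  have hb : (Matrix.of (s.piecewise (M : n → n → ℂ) (1 : Matrix n n ℂ))).submatrix e e =
      Matrix.fromBlocks (M.submatrix Subtype.val Subtype.val)
        (M.submatrix Subtype.val Subtype.val) 0 1 := by
    ext i j
    rcases i with i | i <;> rcases j with j | j <;>
      simp only [Matrix.submatrix_apply, Equiv.sumCompl_apply_inl, Equiv.sumCompl_apply_inr,
        Matrix.of_apply, Matrix.fromBlocks_apply₁₁, Matrix.fromBlocks_apply₁₂,
        Matrix.fromBlocks_apply₂₁, Matrix.fromBlocks_apply₂₂, e]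
    · simp only [Finset.piecewise, i.2, if_true]
    · simp only [Finset.piecewise, i.2, if_true]
    · simp only [Finset.piecewise, i.2, if_false]
      have : (i : n) ≠ (j : n) := fun hij => i.2 (hij ▸ j.2)
      simp [Matrix.one_apply, this]
    · simp only [Finset.piecewise, i.2, if_false]
      simp [Matrix.one_apply, Subtype.ext_iff]
  rw [hb, Matrix.det_fromBlocks_zero₂₁, Matrix.det_one, mul_one]

/-- Combinatorial expansion of `det (1 + L)` for the block anti-diagonal matrix
`L = [[0, a], [d, 0]]` on `I ⊕ K`: a sum over pairs of subsets `S₊ ⊆ I`, `S₋ ⊆ K`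
of equal cardinality of `(-1)^{|S₊|} · det(a_{S₊ S₋}) · det(d_{S₋ S₊})`. -/
theorem det_one_add_blockAntidiag_combinatorial_expansion (I K : Type)
    [Fintype I] [Fintype K] [DecidableEq I] [DecidableEq K]
    (a : Matrix I K ℂ) (d : Matrix K I ℂ) :
    (1 + Matrix.fromBlocks 0 a d 0).det =
      ∑ Sp : Finset I, ∑ Sm : Finset K,
        if h : Sp.card = Sm.card then
          (-1 : ℂ) ^ Sp.card
            * (Matrix.of fun i j : Fin Sp.card =>
                a ((Sp.equivFin.symm i : I)) ((Sm.equivFin.symm (Fin.cast h j) : K))).det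
            * (Matrix.of fun i j : Fin Sp.card =>
                d ((Sm.equivFin.symm (Fin.cast h i) : K)) ((Sp.equivFin.symm j : I))).det
        else 0 := by
  classical
  set L : Matrix (I ⊕ K) (I ⊕ K) ℂ := Matrix.fromBlocks 0 a d 0 with hL
  -- Step 1: expand det (1 + L) as a sum over subsets of I ⊕ K
  have step1 : (1 + L).det =
      ∑ s : Finset (I ⊕ K), (Matrix.of (s.piecewise (L : (I ⊕ K) → (I ⊕ K) → ℂ)
        (1 : Matrix (I ⊕ K) (I ⊕ K) ℂ))).det := by
    have hadd := (Matrix.detRowAlternating :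
        ((I ⊕ K) → ℂ) [⋀^(I ⊕ K)]→ₗ[ℂ] ℂ).toMultilinearMap.map_add_univ
        (L : (I ⊕ K) → (I ⊕ K) → ℂ) ((1 : Matrix (I ⊕ K) (I ⊕ K) ℂ) : (I ⊕ K) → (I ⊕ K) → ℂ)
    have h1L : (1 + L) = Matrix.of ((L : (I ⊕ K) → (I ⊕ K) → ℂ) +
        ((1 : Matrix (I ⊕ K) (I ⊕ K) ℂ) : (I ⊕ K) → (I ⊕ K) → ℂ)) := by
      ext i j
      simp [add_comm]
      rfl
    rw [h1L]
    exact hadd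
  rw [step1]
  -- Step 2: each term is a principal minor of L
  have step2 : ∀ s : Finset (I ⊕ K),
      (Matrix.of (s.piecewise (L : (I ⊕ K) → (I ⊕ K) → ℂ)
        (1 : Matrix (I ⊕ K) (I ⊕ K) ℂ))).det =
        (L.submatrix (Subtype.val : {x // x ∈ s} → (I ⊕ K)) Subtype.val).det :=
    fun s => aux_det_piecewise_one L s
  simp_rw [step2]
  -- Step 3: reindex the sum over subsets of I ⊕ K by pairs of subsets
  let E : (Finset I × Finset K) ≃ Finset (I ⊕ K) :=
    { toFun := fun p => p.1.disjSum p.2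
      invFun := fun s => (s.toLeft, s.toRight)
      left_inv := fun p => by simp
      right_inv := fun s => Finset.toLeft_disjSum_toRight }
  rw [← Equiv.sum_comp E (fun s : Finset (I ⊕ K) =>
    (L.submatrix (Subtype.val : {x // x ∈ s} → (I ⊕ K)) Subtype.val).det),
    Fintype.sum_prod_type]
  refine Finset.sum_congr rfl fun Sp _ => Finset.sum_congr rfl fun Sm _ => ?_
  -- Step 4: compute the principal minor on Sp.disjSum Sm
  have hEapp : E (Sp, Sm) = Sp.disjSum Sm := rfl
  rw [hEapp]
  set s : Finset (I ⊕ K) := Sp.disjSum Sm with hs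
  let f : (↥Sp ⊕ ↥Sm) ≃ ↥s := auxDisjSumEquiv Sp Sm
  rw [← Matrix.det_submatrix_equiv_self f]
  have hblock : (L.submatrix (Subtype.val : {x // x ∈ s} → (I ⊕ K))
      Subtype.val).submatrix f f =
      Matrix.fromBlocks 0 (a.submatrix Subtype.val Subtype.val)
        (d.submatrix Subtype.val Subtype.val) 0 := by
    ext i j
    rcases i with i | i <;> rcases j with j | j <;> rfl
  rw [hblock]
  by_cases h : Sp.card = Sm.card
  · rw [dif_pos h]
    let g : (↥Sp ⊕ ↥Sm) ≃ (Fin Sp.card ⊕ Fin Sp.card) :=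
      Equiv.sumCongr Sp.equivFin (Sm.equivFin.trans (finCongr h.symm))
    rw [← Matrix.det_submatrix_equiv_self g.symm]
    have hB : (Matrix.fromBlocks 0 (a.submatrix Subtype.val Subtype.val)
        (d.submatrix Subtype.val Subtype.val) 0).submatrix g.symm g.symm =
        Matrix.fromBlocks 0
          (Matrix.of fun i j : Fin Sp.card =>
            a ((Sp.equivFin.symm i : I)) ((Sm.equivFin.symm (Fin.cast h j) : K)))
          (Matrix.of fun i j : Fin Sp.card =>
            d ((Sm.equivFin.symm (Fin.cast h i) : K)) ((Sp.equivFin.symm j : I))) 0 := by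
      ext i j
      rcases i with i | i <;> rcases j with j | j <;>
        simp [g, Matrix.submatrix_apply, Equiv.sumCongr_symm, Equiv.sumCongr_apply,
          Fin.cast, finCongr]
    rw [hB, aux_det_fromBlocks_antidiag]
  · rw [dif_neg h]
    refine aux_det_fromBlocks_antidiag_ne ?_ _ _
    simpa [Fintype.card_coe] using h
end

section
/- Let V be a finite-dimensional complex vector space with direct sum decomposition V = V₊ ⊕ V₋, Π the projection onto V₊ along V₋, and Π₋ := 1 − Π. Let Ψ₊ be an invertible endomorphism of V preserving V₊ (i.e. Ψ₊(V₊) ⊆ V₊ and Ψ₊⁻¹(V₊) ⊆ V₊) and Ψ₋ an invertible endomorphism preserving V₋. Set J := Ψ₋⁻¹ ∘ Ψ₊, a := Ψ₊ ∘ Π ∘ Ψ₊⁻¹ − Π and d := Ψ₋ ∘ Π₋ ∘ Ψ₋⁻¹ − Π₋. Then det_V(1 + a + d) = det_{V₊}((Π ∘ J⁻¹ ∘ Π ∘ J) restricted to V₊). -/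
open Module Submodule

/-- Determinant of a block-triangular endomorphism (preserving `W`) equals the
determinant of its restriction to `W` times the determinant of the induced map on a
complement `W'`. -/
private lemma det_block_triangular_aux
    {V : Type} [AddCommGroup V] [Module ℂ V] [FiniteDimensional ℂ V]
    (W W' : Submodule ℂ V) (hc : IsCompl W W') (f : V →ₗ[ℂ] V)
    (h1 : ∀ x ∈ W, f x ∈ W) :
    LinearMap.det f = LinearMap.det (f.restrict h1) *
      LinearMap.det ((W'.projectionOnto W hc.symm) ∘ₗ (f ∘ₗ W'.subtype)) := by
  classical
  have hsymm : ∀ x : V, (W.prodEquivOfIsCompl W' hc).symm x =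
      (W.projectionOnto W' hc x, W'.projectionOnto W hc.symm x) := fun x =>
    (W.prodEquivOfIsCompl W' hc).symm_apply_eq.2 (by
      simp [coe_prodEquivOfIsCompl', (projection_add_projection_eq_self hc x :
          (W.projectionOnto W' hc x : V) + (W'.projectionOnto W hc.symm x : V) = x)])
  have hconj := LinearMap.det_conj f (W.prodEquivOfIsCompl W' hc).symm
  rw [LinearEquiv.symm_symm] at hconj
  set bp := finBasis ℂ W with hbp
  set bm := finBasis ℂ W' with hbm
  rw [← hconj, ← LinearMap.det_toMatrix (bp.prod bm)]
  set F : (W × W') →ₗ[ℂ] (W × W') :=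
    ((W.prodEquivOfIsCompl W' hc).symm : V →ₗ[ℂ] (W × W')) ∘ₗ f ∘ₗ
      ((W.prodEquivOfIsCompl W' hc) : (W × W') →ₗ[ℂ] V) with hF
  have hXblock : LinearMap.toMatrix (bp.prod bm) (bp.prod bm) F =
      Matrix.fromBlocks (LinearMap.toMatrix bp bp (f.restrict h1))
        ((LinearMap.toMatrix (bp.prod bm) (bp.prod bm) F).toBlocks₁₂) 0
        (LinearMap.toMatrix bm bm
          ((W'.projectionOnto W hc.symm) ∘ₗ (f ∘ₗ W'.subtype))) := by
    ext (i | i) (j | j)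
    · -- (inl, inl)
      have hmemf : f (bp j : V) ∈ W := h1 _ (bp j).2
      have hproj : W.projectionOnto W' hc (f (bp j : V)) = ⟨f (bp j : V), hmemf⟩ := by
        simpa using projectionOnto_apply_left hc (⟨f (bp j : V), hmemf⟩ : W)
      simp [LinearMap.toMatrix_apply, hF, LinearMap.comp_apply, LinearEquiv.coe_coe,
        coe_prodEquivOfIsCompl', hsymm, hproj, LinearMap.restrict_apply,
        Basis.prod_repr_inl, Basis.prod_repr_inr]
    · -- (inl, inr) : definitional
      simp [Matrix.toBlocks₁₂]
    · -- (inr, inl) : zero block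
      have hmemf : f (bp j : V) ∈ W := h1 _ (bp j).2
      have hproj : W'.projectionOnto W hc.symm (f (bp j : V)) = 0 :=
        projectionOnto_apply_of_mem_right hc.symm hmemf
      simp [LinearMap.toMatrix_apply, hF, LinearMap.comp_apply, LinearEquiv.coe_coe,
        coe_prodEquivOfIsCompl', hsymm, hproj,
        Basis.prod_repr_inl, Basis.prod_repr_inr]
    · -- (inr, inr)
      simp [LinearMap.toMatrix_apply, hF, LinearMap.comp_apply, LinearEquiv.coe_coe,
        coe_prodEquivOfIsCompl', hsymm,
        Basis.prod_repr_inl, Basis.prod_repr_inr]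
  rw [hXblock, Matrix.det_fromBlocks_zero₂₁, LinearMap.det_toMatrix, LinearMap.det_toMatrix]

/-- Finite-dimensional form of the Fredholm determinant representation
`τ[J] = det_{V₊}(Π J⁻¹ Π J) = det_V(1 + a + d)`, where `a = Ψ₊ Π Ψ₊⁻¹ - Π` and
`d = Ψ₋ Π₋ Ψ₋⁻¹ - Π₋` are the Cauchy–Plemelj operators and `J = Ψ₋⁻¹ ∘ Ψ₊`. -/
theorem det_one_add_cauchyPlemelj_eq_det_restrict
    (V : Type) [AddCommGroup V] [Module ℂ V] [FiniteDimensional ℂ V]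
    (Vp Vm : Submodule ℂ V) (hc : IsCompl Vp Vm)
    (Ψp Ψm : V ≃ₗ[ℂ] V)
    (hΨp : ∀ x ∈ Vp, Ψp x ∈ Vp) (hΨp' : ∀ x ∈ Vp, Ψp.symm x ∈ Vp)
    (hΨm : ∀ x ∈ Vm, Ψm x ∈ Vm) (hΨm' : ∀ x ∈ Vm, Ψm.symm x ∈ Vm)
    (P a d J Jinv : V →ₗ[ℂ] V)
    (hP : P = Vp.subtype ∘ₗ Vp.linearProjOfIsCompl Vm hc)
    (hJ : J = Ψm.symm.toLinearMap ∘ₗ Ψp.toLinearMap)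
    (hJinv : Jinv = Ψp.symm.toLinearMap ∘ₗ Ψm.toLinearMap)
    (ha : a = Ψp.toLinearMap ∘ₗ P ∘ₗ Ψp.symm.toLinearMap - P)
    (hd : d = Ψm.toLinearMap ∘ₗ (LinearMap.id - P) ∘ₗ Ψm.symm.toLinearMap - (LinearMap.id - P))
    (hmem : ∀ x ∈ Vp, (P ∘ₗ Jinv ∘ₗ P ∘ₗ J) x ∈ Vp) :
    LinearMap.det (LinearMap.id + a + d) =
      LinearMap.det ((P ∘ₗ Jinv ∘ₗ P ∘ₗ J).restrict hmem) := by
  classical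
  -- basic facts about the projection P and Q = 1 - P
  have hPmem : ∀ x : V, P x ∈ Vp := by
    intro x; rw [hP]; exact (Vp.projectionOnto Vm hc x).2
  have hPleft : ∀ x ∈ Vp, P x = x := by
    intro x hx; rw [hP]
    have := projectionOnto_apply_left hc (⟨x, hx⟩ : Vp)
    exact congrArg Subtype.val this
  have hPright : ∀ x ∈ Vm, P x = 0 := by
    intro x hx; rw [hP]
    simp [show Vp.linearProjOfIsCompl Vm hc x = 0 from projectionOnto_apply_of_mem_right hc hx]
  set Q : V →ₗ[ℂ] V := LinearMap.id - P with hQ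
  have hQapp : ∀ x : V, Q x = x - P x := by intro x; simp [hQ]
  have hQmem : ∀ x : V, Q x ∈ Vm := by
    intro x
    have hx : (Vp.projectionOnto Vm hc x : V) + (Vm.projectionOnto Vp hc.symm x : V) = x :=
      projection_add_projection_eq_self hc x
    have h2 : Q x = (Vm.projectionOnto Vp hc.symm x : V) := by
      rw [hQapp, hP]
      simp only [LinearMap.comp_apply, coe_subtype]
      exact sub_eq_of_eq_add' hx.symm
    rw [h2]; exact (Vm.projectionOnto Vp hc.symm x).2
  have hQleft : ∀ x ∈ Vp, Q x = 0 := by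
    intro x hx; rw [hQapp, hPleft x hx, sub_self]
  have hQright : ∀ x ∈ Vm, Q x = x := by
    intro x hx; rw [hQapp, hPright x hx, sub_zero]
  -- pointwise facts about a and d
  have haapp : ∀ x : V, a x = Ψp (P (Ψp.symm x)) - P x := by
    intro x; rw [ha]; simp [LinearMap.comp_apply]
  have hdapp : ∀ x : V, d x = Ψm (Q (Ψm.symm x)) - Q x := by
    intro x; rw [hd]; simp [LinearMap.sub_apply, LinearMap.comp_apply]
  have hamem : ∀ x : V, a x ∈ Vp := by
    intro x; rw [haapp]
    exact sub_mem (hΨp _ (hPmem _)) (hPmem _)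
  have hdmem : ∀ x : V, d x ∈ Vm := by
    intro x; rw [hdapp]
    exact sub_mem (hΨm _ (hQmem _)) (hQmem _)
  have haP : ∀ x ∈ Vp, a x = 0 := by
    intro x hx
    rw [haapp, hPleft _ (hΨp' x hx), LinearEquiv.apply_symm_apply, hPleft x hx, sub_self]
  have hdQ : ∀ x ∈ Vm, d x = 0 := by
    intro x hx
    rw [hdapp, hQright _ (hΨm' x hx), LinearEquiv.apply_symm_apply, hQright x hx, sub_self]
  -- a * a = 0 and d * d = 0
  have haa : a * a = 0 := by
    ext x; simp [Module.End.mul_apply, haP _ (hamem x)]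
  have hdd : d * d = 0 := by
    ext x; simp [Module.End.mul_apply, hdQ _ (hdmem x)]
  -- factorization  1 + a + d = (1 + a) * ((1 - a*d) * (1 + d))
  have hfact : (1 + a) * ((1 - a * d) * (1 + d)) = 1 + a + d := by
    have e1 : (1 - a * d) * (1 + d) = 1 + d - a * d - a * (d * d) := by noncomm_ring
    rw [hdd, mul_zero, sub_zero] at e1
    have e2 : (1 + a) * (1 + d - a * d) = 1 + a + d - a * a * d := by noncomm_ring
    rw [haa, zero_mul, sub_zero] at e2
    rw [e1, e2]
  -- determinants of the unipotent factors are 1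
  have hdet_a : LinearMap.det (1 + a) = 1 := by
    have h1 : ∀ x ∈ Vp, (1 + a) x ∈ Vp := by
      intro x hx
      simpa [LinearMap.add_apply, haP x hx] using hx
    rw [det_block_triangular_aux Vp Vm hc (1 + a) h1]
    have hr : (1 + a).restrict h1 = LinearMap.id := by
      ext ⟨x, hx⟩
      simp [LinearMap.restrict_apply, haP x hx]
    have hg : (Vm.projectionOnto Vp hc.symm) ∘ₗ ((1 + a) ∘ₗ Vm.subtype) = LinearMap.id := by
      ext x
      have h0 : Vm.projectionOnto Vp hc.symm (a (x : V)) = 0 :=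
        projectionOnto_apply_of_mem_right hc.symm (hamem _)
      simp [LinearMap.comp_apply, LinearMap.add_apply, map_add, h0]
    rw [hr, hg]; simp [LinearMap.det_id]
  have hdet_d : LinearMap.det (1 + d) = 1 := by
    have h1 : ∀ x ∈ Vm, (1 + d) x ∈ Vm := by
      intro x hx
      simpa [LinearMap.add_apply, hdQ x hx] using hx
    rw [det_block_triangular_aux Vm Vp hc.symm (1 + d) h1]
    have hr : (1 + d).restrict h1 = LinearMap.id := by
      ext ⟨x, hx⟩
      simp [LinearMap.restrict_apply, hdQ x hx]
    have hg : (Vp.projectionOnto Vm hc.symm.symm) ∘ₗ ((1 + d) ∘ₗ Vp.subtype) =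
        LinearMap.id := by
      ext x
      have h0 : Vp.projectionOnto Vm hc.symm.symm (d (x : V)) = 0 :=
        projectionOnto_apply_of_mem_right hc.symm.symm (hdmem _)
      simp [LinearMap.comp_apply, LinearMap.add_apply, map_add, h0]
    rw [hr, hg]; simp [LinearMap.det_id]
  -- determinant of the middle factor
  have h1mid : ∀ x ∈ Vp, (1 - a * d) x ∈ Vp := by
    intro x hx
    have hx2 : (1 - a * d) x = x - a (d x) := by
      simp [LinearMap.sub_apply, Module.End.mul_apply]
    rw [hx2]
    exact sub_mem hx (hamem _)
  have hdet_mid : LinearMap.det (1 - a * d) =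
      LinearMap.det ((1 - a * d).restrict h1mid) := by
    rw [det_block_triangular_aux Vp Vm hc (1 - a * d) h1mid]
    have hg : (Vm.projectionOnto Vp hc.symm) ∘ₗ ((1 - a * d) ∘ₗ Vm.subtype)
        = LinearMap.id := by
      ext x
      have h0 : d (x : V) = 0 := hdQ _ x.2
      simp [LinearMap.comp_apply, LinearMap.sub_apply, Module.End.mul_apply, h0]
    rw [hg]; simp [LinearMap.det_id]
  -- the key pointwise identity relating P J⁻¹ P J on V₊ with 1 - a*d
  have hkey : ∀ x ∈ Vp, (P ∘ₗ Jinv ∘ₗ P ∘ₗ J) x = Ψp.symm ((1 - a * d) (Ψp x)) := by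
    intro x hx
    have hu : Ψp x ∈ Vp := hΨp x hx
    have hdu : d (Ψp x) = Ψm (Q (Ψm.symm (Ψp x))) := by
      rw [hdapp, hQleft _ hu, sub_zero]
    have hJx : J x = Ψm.symm (Ψp x) := by simp [hJ, LinearMap.comp_apply]
    have hPdu : P (d (Ψp x)) = 0 := hPright _ (hdmem _)
    have hadu : a (d (Ψp x)) = Ψp (P (Ψp.symm (d (Ψp x)))) := by
      rw [haapp, hPdu, sub_zero]
    have hmid : (1 - a * d) (Ψp x) = Ψp x - a (d (Ψp x)) := by
      simp [LinearMap.sub_apply, Module.End.mul_apply]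
    have hPJ : P (J x) = Ψm.symm (Ψp x) - Q (Ψm.symm (Ψp x)) := by
      rw [hJx, hQapp]; abel
    have hJinvPJ : Jinv (P (J x)) = Ψp.symm (Ψp x - d (Ψp x)) := by
      rw [hJinv, hPJ]
      simp only [LinearMap.comp_apply, LinearEquiv.coe_coe, map_sub,
        LinearEquiv.apply_symm_apply]
      rw [hdu]
    calc (P ∘ₗ Jinv ∘ₗ P ∘ₗ J) x = P (Jinv (P (J x))) := by
          simp [LinearMap.comp_apply]
      _ = P (Ψp.symm (Ψp x)) - P (Ψp.symm (d (Ψp x))) := by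
          rw [hJinvPJ, map_sub, map_sub]
      _ = x - P (Ψp.symm (d (Ψp x))) := by
          rw [LinearEquiv.symm_apply_apply, hPleft x hx]
      _ = Ψp.symm ((1 - a * d) (Ψp x)) := by
          rw [hmid, map_sub, hadu, LinearEquiv.symm_apply_apply,
            LinearEquiv.symm_apply_apply]
  -- conjugating the restriction by the equivalence induced by Ψp on V₊
  have hmap : Vp.map (Ψp : V →ₗ[ℂ] V) = Vp := by
    apply le_antisymm
    · rintro y ⟨x, hx, rfl⟩; exact hΨp x hx
    · intro y hy; exact ⟨Ψp.symm y, hΨp' y hy, Ψp.apply_symm_apply y⟩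
  set ep : Vp ≃ₗ[ℂ] Vp := Ψp.ofSubmodules Vp Vp hmap with hep
  have hrestr_eq : (P ∘ₗ Jinv ∘ₗ P ∘ₗ J).restrict hmem =
      (ep.symm : Vp →ₗ[ℂ] Vp) ∘ₗ (((1 - a * d).restrict h1mid) ∘ₗ (ep : Vp →ₗ[ℂ] Vp)) := by
    ext ⟨x, hx⟩
    have h1 : ((ep : Vp →ₗ[ℂ] Vp) ⟨x, hx⟩ : V) = Ψp x := by
      simp [hep, LinearEquiv.ofSubmodules_apply]
    have h2 : ∀ y : Vp, ((ep.symm : Vp →ₗ[ℂ] Vp) y : V) = Ψp.symm (y : V) := by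
      intro y; simp [hep, LinearEquiv.ofSubmodules_symm_apply]
    simp only [LinearMap.restrict_coe_apply, LinearMap.comp_apply]
    rw [h2]
    rw [LinearMap.restrict_coe_apply]
    rw [h1]
    exact hkey x hx
  have hconj := LinearMap.det_conj ((1 - a * d).restrict h1mid) ep.symm
  rw [LinearEquiv.symm_symm] at hconj
  -- assemble everything
  have hid : (LinearMap.id : V →ₗ[ℂ] V) + a + d = 1 + a + d := rfl
  rw [hid, ← hfact]
  rw [Module.End.mul_eq_comp, LinearMap.det_comp, Module.End.mul_eq_comp, LinearMap.det_comp,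
    hdet_a, hdet_d, one_mul, mul_one, hdet_mid, hrestr_eq]
  rw [← LinearMap.comp_assoc] at hconj ⊢
  exact hconj.symm
end

section
/- Let V be a finite-dimensional complex vector space with direct sum decomposition V = V₊ ⊕ V₋, Π the projection onto V₊ along V₋ and Π₋ := 1 − Π. Let t ↦ Ψ₊(t), Ψ̄₊(t) be differentiable families of invertible endomorphisms of V preserving V₊, and t ↦ Ψ₋(t), Ψ̄₋(t) differentiable families of invertible endomorphisms preserving V₋, such that Ψ₋(t)⁻¹ ∘ Ψ₊(t) = Ψ̄₊(t) ∘ Ψ̄₋(t)⁻¹ =: J(t) for all t. Then τ(t) := det_{V₊}((Π ∘ J(t)⁻¹ ∘ Π ∘ J(t)) restricted to V₊) is nonzero for all t, and (d/dt) log τ(t) = Tr_V[ J⁻¹ (dJ/dt) ∘ ( Ψ₊⁻¹ΠΨ₊ − Π + Ψ̄₋Π₋Ψ̄₋⁻¹ − Π₋ ) ]. -/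
open Finset in
private lemma perm_eq_one_of_fixes {n : Type*} [DecidableEq n] (σ : Equiv.Perm n) (i : n)
    (h : ∀ j, j ≠ i → σ j = j) : σ = 1 := by
  ext j
  by_cases hj : j = i
  · subst hj
    by_contra hne
    have h1 : σ j ≠ j := hne
    have h2 : σ (σ j) = σ j := h (σ j) h1
    exact h1 (σ.injective h2)
  · exact h j hj

open Finset in
private lemma det_hasDerivAt_one {n : Type*} [Fintype n] [DecidableEq n]
    (m : ℝ → Matrix n n ℂ) (m' : Matrix n n ℂ) (t₀ : ℝ)
    (hd : ∀ i j, HasDerivAt (fun t => m t i j) (m' i j) t₀)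
    (h1 : m t₀ = 1) :
    HasDerivAt (fun t => (m t).det) m'.trace t₀ := by
  have key : ∀ σ : Equiv.Perm n,
      HasDerivAt (fun t => ∏ i, m t (σ i) i)
        (∑ i, (∏ j ∈ univ.erase i, m t₀ (σ j) j) • m' (σ i) i) t₀ :=
    fun σ => HasDerivAt.fun_finsetProd (fun i _ => hd (σ i) i)
  have sum : HasDerivAt (fun t => ∑ σ : Equiv.Perm n,
      ((Equiv.Perm.sign σ : ℤ) : ℂ) * ∏ i, m t (σ i) i)
      (∑ σ : Equiv.Perm n, ((Equiv.Perm.sign σ : ℤ) : ℂ) *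
        (∑ i, (∏ j ∈ univ.erase i, m t₀ (σ j) j) • m' (σ i) i)) t₀ :=
    HasDerivAt.fun_sum (fun σ _ => (key σ).const_mul _)
  have hfun : (fun t => (m t).det) = fun t => ∑ σ : Equiv.Perm n,
      ((Equiv.Perm.sign σ : ℤ) : ℂ) * ∏ i, m t (σ i) i := by
    funext t; rw [Matrix.det_apply]
    refine Finset.sum_congr rfl fun σ _ => ?_
    simp [Units.smul_def, zsmul_eq_mul]
  have hval : (∑ σ : Equiv.Perm n, ((Equiv.Perm.sign σ : ℤ) : ℂ) *
      (∑ i, (∏ j ∈ univ.erase i, m t₀ (σ j) j) • m' (σ i) i)) = m'.trace := by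
    rw [Finset.sum_eq_single_of_mem (1 : Equiv.Perm n) (mem_univ _)]
    · simp only [Equiv.Perm.sign_one, Units.val_one, Int.cast_one, one_mul,
        Equiv.Perm.one_apply, h1]
      rw [Matrix.trace]
      refine Finset.sum_congr rfl fun i _ => ?_
      rw [Finset.prod_eq_one fun j _ => Matrix.one_apply_eq j, one_smul]
      rfl
    · intro σ _ hσ
      have : ∀ i : n, (∏ j ∈ univ.erase i, m t₀ (σ j) j) = 0 := by
        intro i
        have : ∃ j, j ≠ i ∧ σ j ≠ j := by
          by_contra hcon
          push_neg at hcon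
          exact hσ (perm_eq_one_of_fixes σ i hcon)
        obtain ⟨j, hji, hσj⟩ := this
        refine Finset.prod_eq_zero (mem_erase.2 ⟨hji, mem_univ j⟩) ?_
        rw [h1]; exact Matrix.one_apply_ne hσj
      simp [this]
  rw [hfun, ← hval]
  exact sum

private lemma det_hasDerivAt {n : Type*} [Fintype n] [DecidableEq n]
    (m : ℝ → Matrix n n ℂ) (m' w : Matrix n n ℂ) (t₀ : ℝ)
    (hd : ∀ i j, HasDerivAt (fun t => m t i j) (m' i j) t₀)
    (hw : w * m t₀ = 1) (hw' : m t₀ * w = 1) :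
    HasDerivAt (fun t => (m t).det) ((m t₀).det * (w * m').trace) t₀ := by
  have hd' : ∀ i j, HasDerivAt (fun t => (w * m t) i j) ((w * m') i j) t₀ := by
    intro i j
    simp only [Matrix.mul_apply]
    exact HasDerivAt.fun_sum (fun k _ => (hd k j).const_mul (w i k))
  have base := det_hasDerivAt_one (fun t => w * m t) (w * m') t₀ hd' hw
  have h2 := base.const_mul ((m t₀).det)
  have hfun : (fun t => (m t₀).det * (w * m t).det) = fun t => (m t).det := by
    funext t
    rw [Matrix.det_mul, ← mul_assoc, ← Matrix.det_mul, hw', Matrix.det_one, one_mul]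
  rwa [hfun] at h2

set_option maxHeartbeats 2000000 in
/-- Finite-dimensional form of Widom's differentiation formula: if the jump
`J(t) = Ψ₋(t)⁻¹ ∘ Ψ₊(t) = Ψ̄₊(t) ∘ Ψ̄₋(t)⁻¹` admits both the direct and the dual
factorization for all `t`, then `τ(t) = det_{V₊}(Π J⁻¹ Π J)` is nonvanishing and
`(d/dt) log τ = Tr[J⁻¹ J' (Ψ₊⁻¹ΠΨ₊ - Π + Ψ̄₋Π₋Ψ̄₋⁻¹ - Π₋)]`. -/
theorem widom_derivative_formula
    (V : Type) [NormedAddCommGroup V] [NormedSpace ℂ V] [FiniteDimensional ℂ V]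
    (Vp Vm : Submodule ℂ V) (hc : IsCompl Vp Vm)
    (P : V →L[ℂ] V) (hP1 : ∀ x ∈ Vp, P x = x) (hP2 : ∀ x ∈ Vm, P x = 0)
    (hPmem : ∀ x : V, P x ∈ Vp)
    (Ψp Ψpinv Ψm Ψminv Ψbp Ψbpinv Ψbm Ψbminv : ℝ → V →L[ℂ] V)
    (hinvp : ∀ t, Ψp t ∘L Ψpinv t = 1 ∧ Ψpinv t ∘L Ψp t = 1)
    (hinvm : ∀ t, Ψm t ∘L Ψminv t = 1 ∧ Ψminv t ∘L Ψm t = 1)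
    (hinvbp : ∀ t, Ψbp t ∘L Ψbpinv t = 1 ∧ Ψbpinv t ∘L Ψbp t = 1)
    (hinvbm : ∀ t, Ψbm t ∘L Ψbminv t = 1 ∧ Ψbminv t ∘L Ψbm t = 1)
    (hpres_p : ∀ t, (∀ x ∈ Vp, Ψp t x ∈ Vp) ∧ (∀ x ∈ Vp, Ψpinv t x ∈ Vp))
    (hpres_bp : ∀ t, (∀ x ∈ Vp, Ψbp t x ∈ Vp) ∧ (∀ x ∈ Vp, Ψbpinv t x ∈ Vp))
    (hpres_m : ∀ t, (∀ x ∈ Vm, Ψm t x ∈ Vm) ∧ (∀ x ∈ Vm, Ψminv t x ∈ Vm))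
    (hpres_bm : ∀ t, (∀ x ∈ Vm, Ψbm t x ∈ Vm) ∧ (∀ x ∈ Vm, Ψbminv t x ∈ Vm))
    (hdiff : Differentiable ℝ Ψp ∧ Differentiable ℝ Ψm ∧
      Differentiable ℝ Ψbp ∧ Differentiable ℝ Ψbm)
    (hfact : ∀ t, Ψminv t ∘L Ψp t = Ψbp t ∘L Ψbminv t)
    (J Jinv : ℝ → V →L[ℂ] V)
    (hJ : ∀ t, J t = Ψminv t ∘L Ψp t) (hJinv : ∀ t, Jinv t = Ψpinv t ∘L Ψm t)
    (hmem : ∀ t, ∀ x ∈ Vp, (P ∘L Jinv t ∘L P ∘L J t) x ∈ Vp)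
    (τ : ℝ → ℂ)
    (hτ : ∀ t, τ t =
      LinearMap.det ((P ∘L Jinv t ∘L P ∘L J t : V →L[ℂ] V).toLinearMap.restrict (hmem t))) :
    ∀ t : ℝ, τ t ≠ 0 ∧
      HasDerivAt τ
        (LinearMap.trace ℂ V
          ((Jinv t ∘L deriv J t ∘L
            ((Ψpinv t ∘L P ∘L Ψp t) - P +
              (Ψbm t ∘L (1 - P) ∘L Ψbminv t) - (1 - P))).toLinearMap) * τ t) t := by
  obtain ⟨hdp, hdm, hdbp, hdbm⟩ := hdiff
  -- ############ generic projection facts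
  have hQm : ∀ x : V, x - P x ∈ Vm := by
    intro x
    have hx : x ∈ Vp ⊔ Vm := by rw [hc.sup_eq_top]; trivial
    rcases Submodule.mem_sup.1 hx with ⟨a, ha, b, hb, hab⟩
    have hPx : P x = a := by rw [← hab, map_add, hP1 a ha, hP2 b hb, add_zero]
    rw [hPx, ← hab]; simpa using hb
  -- pointwise plus/minus facts
  have fpfact : ∀ (X : V →L[ℂ] V), (∀ x ∈ Vp, X x ∈ Vp) → ∀ y, P (X (P y)) = X (P y) :=
    fun X hX y => hP1 _ (hX _ (hPmem y))
  have gmfact : ∀ (X : V →L[ℂ] V), (∀ x ∈ Vm, X x ∈ Vm) → ∀ y, P (X (P y)) = P (X y) := by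
    intro X hX y
    have h1 : X y - X (P y) ∈ Vm := by rw [← map_sub]; exact hX _ (hQm y)
    have h2 := hP2 _ h1
    rw [map_sub] at h2
    exact (sub_eq_zero.mp h2).symm
  have hinvp' : ∀ s, Ψp s * Ψpinv s = 1 ∧ Ψpinv s * Ψp s = 1 := hinvp
  have hinvm' : ∀ s, Ψm s * Ψminv s = 1 ∧ Ψminv s * Ψm s = 1 := hinvm
  have hinvbp' : ∀ s, Ψbp s * Ψbpinv s = 1 ∧ Ψbpinv s * Ψbp s = 1 := hinvbp
  have hinvbm' : ∀ s, Ψbm s * Ψbminv s = 1 ∧ Ψbminv s * Ψbm s = 1 := hinvbm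
  have hfact' : ∀ s, Ψminv s * Ψp s = Ψbp s * Ψbminv s := hfact
  have hJ' : ∀ s, J s = Ψminv s * Ψp s := hJ
  have hJinv' : ∀ s, Jinv s = Ψpinv s * Ψm s := hJinv
  have ipoint : ∀ (X Y : V →L[ℂ] V), X ∘L Y = 1 → ∀ y, X (Y y) = y := by
    intro X Y h y
    have := ContinuousLinearMap.ext_iff.mp h y
    simpa using this
  -- ############ trace on V
  set trl : (V →L[ℂ] V) → ℂ := fun X => LinearMap.trace ℂ V X.toLinearMap with htrl
  have htr_mul : ∀ X Y : V →L[ℂ] V, trl (X * Y) = trl (Y * X) := by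
    intro X Y
    simp only [htrl]
    have h1 : (X * Y).toLinearMap = X.toLinearMap * Y.toLinearMap := rfl
    have h2 : (Y * X).toLinearMap = Y.toLinearMap * X.toLinearMap := rfl
    rw [h1, h2]
    exact LinearMap.trace_mul_comm ℂ X.toLinearMap Y.toLinearMap
  have htr_add : ∀ X Y : V →L[ℂ] V, trl (X + Y) = trl X + trl Y := by
    intro X Y; simp only [htrl, ContinuousLinearMap.coe_add, map_add]
  have htr_sub : ∀ X Y : V →L[ℂ] V, trl (X - Y) = trl X - trl Y := by
    intro X Y; simp only [htrl, ContinuousLinearMap.coe_sub, map_sub]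
  have htr_neg : ∀ X : V →L[ℂ] V, trl (-X) = - trl X := by
    intro X; simp only [htrl, ContinuousLinearMap.coe_neg, map_neg]
  -- ############ compression to Vp
  set cmpF : (V →L[ℂ] V) → (↥Vp →ₗ[ℂ] ↥Vp) :=
    fun X => ((P ∘L X).toLinearMap).restrict (fun x (_ : x ∈ Vp) => hPmem (X x)) with hcmpF
  have hcmp_apply : ∀ (X : V →L[ℂ] V) (x : ↥Vp), ((cmpF X x : ↥Vp) : V) = P (X x) := by
    intro X x; simp [hcmpF, LinearMap.restrict_apply]
  set vmap : V →ₗ[ℂ] ↥Vp := LinearMap.codRestrict Vp P.toLinearMap (fun x => hPmem x) with hvmap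
  have htraceP : ∀ X : V →L[ℂ] V, trl (X * P) = LinearMap.trace ℂ ↥Vp (cmpF X) := by
    intro X
    have h1 : (X * P).toLinearMap = (X.toLinearMap ∘ₗ Vp.subtype) ∘ₗ vmap := by
      ext x; rfl
    have h2 : vmap ∘ₗ (X.toLinearMap ∘ₗ Vp.subtype) = cmpF X := by
      ext x
      simp [hvmap, hcmpF, LinearMap.restrict_apply]
    simp only [htrl]
    rw [h1, LinearMap.trace_comp_comm', h2]
  have hcomp_right : ∀ X Y : V →L[ℂ] V, (∀ x ∈ Vp, Y x ∈ Vp) →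
      cmpF (X * Y) = cmpF X ∘ₗ cmpF Y := by
    intro X Y hY
    ext x
    simp only [LinearMap.comp_apply]
    rw [hcmp_apply, hcmp_apply, hcmp_apply]
    simp only [ContinuousLinearMap.mul_apply]
    rw [hP1 _ (hY _ x.2)]
  have hcomp_left : ∀ X Y : V →L[ℂ] V, (∀ x ∈ Vm, X x ∈ Vm) →
      cmpF (X * Y) = cmpF X ∘ₗ cmpF Y := by
    intro X Y hX
    ext x
    simp only [LinearMap.comp_apply]
    rw [hcmp_apply, hcmp_apply, hcmp_apply]
    simp only [ContinuousLinearMap.mul_apply]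
    exact (gmfact X hX (Y x)).symm
  have hcomp_mid : ∀ X Y : V →L[ℂ] V, cmpF X ∘ₗ cmpF Y = cmpF (X * P * Y) := by
    intro X Y
    ext x
    simp only [LinearMap.comp_apply]
    rw [hcmp_apply, hcmp_apply, hcmp_apply]
    simp only [ContinuousLinearMap.mul_apply]
  have hcmp_one : cmpF 1 = LinearMap.id := by
    ext x
    rw [hcmp_apply]
    simpa using hP1 _ x.2
  have hcmp_add : ∀ X Y : V →L[ℂ] V, cmpF (X + Y) = cmpF X + cmpF Y := by
    intro X Y; ext x
    simp only [LinearMap.add_apply, Submodule.coe_add]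
    rw [hcmp_apply, hcmp_apply, hcmp_apply]
    simp [map_add]
  have hcmp_smul : ∀ (c : ℂ) (X : V →L[ℂ] V), cmpF (c • X) = c • cmpF X := by
    intro c X; ext x
    simp only [LinearMap.smul_apply, SetLike.val_smul]
    rw [hcmp_apply, hcmp_apply]
    simp [map_smul]
  -- ############ matrices
  set k := Module.finrank ℂ ↥Vp with hk
  set bb : Module.Basis (Fin k) ℂ ↥Vp := Module.finBasis ℂ ↥Vp with hbb
  set Lmat : (V →L[ℂ] V) → Matrix (Fin k) (Fin k) ℂ :=
    fun X => LinearMap.toMatrix bb bb (cmpF X) with hLmat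
  have hentry : ∀ (Φ : ℝ → V →L[ℂ] V) (Φ' : V →L[ℂ] V) (s : ℝ), HasDerivAt Φ Φ' s →
      ∀ i j, HasDerivAt (fun u => Lmat (Φ u) i j) (Lmat Φ' i j) s := by
    intro Φ Φ' s hΦ i j
    let ℓ : (V →L[ℂ] V) →ₗ[ℂ] ℂ :=
      { toFun := fun X => Lmat X i j
        map_add' := by intro X Y; simp only [hLmat, hcmp_add, map_add]; rfl
        map_smul' := by intro c X; simp only [hLmat, hcmp_smul, map_smul]; rfl }
    have := ((ℓ.restrictScalars ℝ).toContinuousLinearMap.hasFDerivAt.comp_hasDerivAt s hΦ)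
    exact this
  have hmat_trace : ∀ X Y : V →L[ℂ] V, (Lmat X * Lmat Y).trace = trl (X * P * Y * P) := by
    intro X Y
    simp only [hLmat]
    rw [← LinearMap.toMatrix_comp bb bb bb, hcomp_mid, ← LinearMap.trace_eq_matrix_trace,
      ← htraceP]
  have hmatinv : ∀ (X Y : V →L[ℂ] V), cmpF X ∘ₗ cmpF Y = LinearMap.id →
      Lmat X * Lmat Y = 1 := by
    intro X Y h
    simp only [hLmat]
    rw [← LinearMap.toMatrix_comp bb bb bb, h, LinearMap.toMatrix_id]
  have hdetne : ∀ X Y : V →L[ℂ] V, Lmat X * Lmat Y = 1 → (Lmat X).det ≠ 0 := by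
    intro X Y h
    have := congrArg Matrix.det h
    rw [Matrix.det_mul, Matrix.det_one] at this
    exact left_ne_zero_of_mul_eq_one this
  -- ############ inverse derivative rule
  have hder_inv : ∀ (Φ Φi : ℝ → V →L[ℂ] V),
      (∀ s, Φ s * Φi s = 1 ∧ Φi s * Φ s = 1) → Differentiable ℝ Φ →
      ∀ s, HasDerivAt Φi (-(Φi s * deriv Φ s * Φi s)) s := by
    intro Φ Φi h hΦ s
    have hfun : Φi = fun u => Ring.inverse (Φ u) := by
      funext u
      have : Ring.inverse ((⟨Φ u, Φi u, (h u).1, (h u).2⟩ : (V →L[ℂ] V)ˣ) : V →L[ℂ] V)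
          = Φi u := Ring.inverse_unit _
      exact this.symm
    have hu := hasFDerivAt_ringInverse (𝕜 := ℂ) (R := V →L[ℂ] V)
      ⟨Φ s, Φi s, (h s).1, (h s).2⟩
    have h2 := (hu.restrictScalars ℝ).comp_hasDerivAt s (hΦ s).hasDerivAt
    have h3 : HasDerivAt (fun u => Ring.inverse (Φ u)) (-(Φi s * deriv Φ s * Φi s)) s := by
      exact h2
    exact h3.congr_of_eventuallyEq (Filter.Eventually.of_forall fun u => by rw [hfun])
  -- ############ tau as a product of four determinants
  have hJinv2 : ∀ s, Jinv s = Ψbm s * Ψbpinv s := by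
    intro s
    have h1 : Jinv s * J s = 1 := by
      rw [hJinv' s, hJ' s]
      calc (Ψpinv s * Ψm s) * (Ψminv s * Ψp s)
          = Ψpinv s * (Ψm s * Ψminv s * Ψp s) := by rw [mul_assoc, ← mul_assoc (Ψm s)]
        _ = 1 := by rw [(hinvm' s).1]; rw [one_mul]; exact (hinvp' s).2
    have h2 : J s * (Ψbm s * Ψbpinv s) = 1 := by
      have hJs : J s = Ψbp s * Ψbminv s := by rw [hJ' s]; exact hfact' s
      rw [hJs]
      calc (Ψbp s * Ψbminv s) * (Ψbm s * Ψbpinv s)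
          = Ψbp s * (Ψbminv s * Ψbm s * Ψbpinv s) := by rw [mul_assoc, ← mul_assoc (Ψbminv s)]
        _ = 1 := by rw [(hinvbm' s).2]; rw [one_mul]; exact (hinvbp' s).1
    calc Jinv s = Jinv s * (J s * (Ψbm s * Ψbpinv s)) := by rw [h2, mul_one]
      _ = (Jinv s * J s) * (Ψbm s * Ψbpinv s) := by rw [mul_assoc]
      _ = Ψbm s * Ψbpinv s := by rw [h1, one_mul]
  have hτ_cmp : ∀ s, τ s = LinearMap.det (cmpF (Jinv s * (P * J s))) := by
    intro s
    rw [hτ s]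
    rfl
  have hsplit : ∀ s, cmpF (Jinv s * (P * J s)) =
      cmpF (Ψbm s) ∘ₗ (cmpF (Ψbpinv s) ∘ₗ (cmpF (Ψminv s) ∘ₗ cmpF (Ψp s))) := by
    intro s
    ext x
    simp only [LinearMap.comp_apply]
    rw [hcmp_apply, hcmp_apply, hcmp_apply, hcmp_apply, hcmp_apply]
    simp only [ContinuousLinearMap.mul_apply]
    rw [hJinv2 s, hJ s]
    simp only [ContinuousLinearMap.mul_apply, ContinuousLinearMap.comp_apply]
    rw [hP1 _ ((hpres_p s).1 _ x.2)]
    rw [hP1 _ ((hpres_bp s).2 _ (hPmem _))]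
  have hdet4 : ∀ s, τ s = (Lmat (Ψbm s)).det *
      ((Lmat (Ψbpinv s)).det * ((Lmat (Ψminv s)).det * (Lmat (Ψp s)).det)) := by
    intro s
    rw [hτ_cmp s, hsplit s, LinearMap.det_comp, LinearMap.det_comp, LinearMap.det_comp]
    simp only [hLmat, LinearMap.det_toMatrix]
  -- identity compressions
  have hid_bm1 : ∀ s, cmpF (Ψbm s) ∘ₗ cmpF (Ψbminv s) = LinearMap.id := by
    intro s; rw [← hcomp_left _ _ ((hpres_bm s).1), (hinvbm' s).1, hcmp_one]
  have hid_bm2 : ∀ s, cmpF (Ψbminv s) ∘ₗ cmpF (Ψbm s) = LinearMap.id := by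
    intro s; rw [← hcomp_left _ _ ((hpres_bm s).2), (hinvbm' s).2, hcmp_one]
  have hid_m1 : ∀ s, cmpF (Ψm s) ∘ₗ cmpF (Ψminv s) = LinearMap.id := by
    intro s; rw [← hcomp_left _ _ ((hpres_m s).1), (hinvm' s).1, hcmp_one]
  have hid_m2 : ∀ s, cmpF (Ψminv s) ∘ₗ cmpF (Ψm s) = LinearMap.id := by
    intro s; rw [← hcomp_left _ _ ((hpres_m s).2), (hinvm' s).2, hcmp_one]
  have hid_bp1 : ∀ s, cmpF (Ψbp s) ∘ₗ cmpF (Ψbpinv s) = LinearMap.id := by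
    intro s; rw [← hcomp_right _ _ ((hpres_bp s).2), (hinvbp' s).1, hcmp_one]
  have hid_bp2 : ∀ s, cmpF (Ψbpinv s) ∘ₗ cmpF (Ψbp s) = LinearMap.id := by
    intro s; rw [← hcomp_right _ _ ((hpres_bp s).1), (hinvbp' s).2, hcmp_one]
  have hid_p1 : ∀ s, cmpF (Ψp s) ∘ₗ cmpF (Ψpinv s) = LinearMap.id := by
    intro s; rw [← hcomp_right _ _ ((hpres_p s).2), (hinvp' s).1, hcmp_one]
  have hid_p2 : ∀ s, cmpF (Ψpinv s) ∘ₗ cmpF (Ψp s) = LinearMap.id := by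
    intro s; rw [← hcomp_right _ _ ((hpres_p s).1), (hinvp' s).2, hcmp_one]
  -- ############ main
  intro t
  have hne1 : (Lmat (Ψbm t)).det ≠ 0 := hdetne _ _ (hmatinv _ _ (hid_bm1 t))
  have hne2 : (Lmat (Ψbpinv t)).det ≠ 0 := hdetne _ _ (hmatinv _ _ (hid_bp2 t))
  have hne3 : (Lmat (Ψminv t)).det ≠ 0 := hdetne _ _ (hmatinv _ _ (hid_m2 t))
  have hne4 : (Lmat (Ψp t)).det ≠ 0 := hdetne _ _ (hmatinv _ _ (hid_p1 t))
  have hne0 : τ t ≠ 0 := by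
    rw [hdet4 t]
    exact mul_ne_zero hne1 (mul_ne_zero hne2 (mul_ne_zero hne3 hne4))
  refine ⟨hne0, ?_⟩

  -- derivatives of the inverse families
  have hmi_d := hder_inv Ψm Ψminv hinvm' hdm t
  have hbpi_d := hder_inv Ψbp Ψbpinv hinvbp' hdbp t
  have hbmi_d := hder_inv Ψbm Ψbminv hinvbm' hdbm t
  have hJfun1 : J = fun u => Ψminv u * Ψp u := funext hJ'
  have hJfun2 : J = fun u => Ψbp u * Ψbminv u := by
    funext u; rw [hJ' u, hfact' u]
  have hJd1 : HasDerivAt J (-((Ψminv t) * (deriv Ψm t) * (Ψminv t)) * (Ψp t) + (Ψminv t) * (deriv Ψp t)) t := by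
    rw [hJfun1]; exact hmi_d.mul (hdp t).hasDerivAt
  have hJd2 : HasDerivAt J ((deriv Ψbp t) * (Ψbminv t) + (Ψbp t) * -((Ψbminv t) * (deriv Ψbm t) * (Ψbminv t))) t := by
    rw [hJfun2]; exact (hdbp t).hasDerivAt.mul hbmi_d
  have hderivJ : deriv J t = -((Ψminv t) * (deriv Ψm t) * (Ψminv t)) * (Ψp t) + (Ψminv t) * (deriv Ψp t) := hJd1.deriv
  have huniq : -((Ψminv t) * (deriv Ψm t) * (Ψminv t)) * (Ψp t) + (Ψminv t) * (deriv Ψp t)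
      = (deriv Ψbp t) * (Ψbminv t) + (Ψbp t) * -((Ψbminv t) * (deriv Ψbm t) * (Ψbminv t)) := hJd1.unique hJd2
  -- pointwise facts at t
  have fpi : ∀ y, P ((Ψpinv t) (P y)) = (Ψpinv t) (P y) := fpfact (Ψpinv t) (hpres_p t).2
  have fqp : ∀ y, P ((Ψbp t) (P y)) = (Ψbp t) (P y) := fpfact (Ψbp t) (hpres_bp t).1
  have gmm : ∀ y, P ((Ψm t) (P y)) = P ((Ψm t) y) := gmfact (Ψm t) (hpres_m t).1
  have gqmi : ∀ y, P ((Ψbminv t) (P y)) = P ((Ψbminv t) y) := gmfact (Ψbminv t) (hpres_bm t).2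
  have ippi : ∀ y, (Ψp t) ((Ψpinv t) y) = y := ipoint (Ψp t) (Ψpinv t) (hinvp t).1
  have immi : ∀ y, (Ψm t) ((Ψminv t) y) = y := ipoint (Ψm t) (Ψminv t) (hinvm t).1
  have iqpiqp : ∀ y, (Ψbpinv t) ((Ψbp t) y) = y := ipoint (Ψbpinv t) (Ψbp t) (hinvbp t).2
  have iqmiqm : ∀ y, (Ψbminv t) ((Ψbm t) y) = y := ipoint (Ψbminv t) (Ψbm t) (hinvbm t).2
  have iqmqmi : ∀ y, (Ψbm t) ((Ψbminv t) y) = y := ipoint (Ψbm t) (Ψbminv t) (hinvbm t).1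
  -- the four matrix determinant derivatives
  have md1 : HasDerivAt (fun s => (Lmat (Ψbm s)).det)
      ((Lmat (Ψbm t)).det * (Lmat (Ψbminv t) * Lmat (deriv Ψbm t)).trace) t :=
    det_hasDerivAt _ _ _ t (hentry Ψbm (deriv Ψbm t) t (hdbm t).hasDerivAt)
      (hmatinv _ _ (hid_bm2 t)) (hmatinv _ _ (hid_bm1 t))
  have md2 : HasDerivAt (fun s => (Lmat (Ψbpinv s)).det)
      ((Lmat (Ψbpinv t)).det * (Lmat (Ψbp t) * Lmat (-((Ψbpinv t) * (deriv Ψbp t) * (Ψbpinv t)))).trace) t :=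
    det_hasDerivAt _ _ _ t (hentry Ψbpinv (-((Ψbpinv t) * (deriv Ψbp t) * (Ψbpinv t))) t hbpi_d)
      (hmatinv _ _ (hid_bp1 t)) (hmatinv _ _ (hid_bp2 t))
  have md3 : HasDerivAt (fun s => (Lmat (Ψminv s)).det)
      ((Lmat (Ψminv t)).det * (Lmat (Ψm t) * Lmat (-((Ψminv t) * (deriv Ψm t) * (Ψminv t)))).trace) t :=
    det_hasDerivAt _ _ _ t (hentry Ψminv (-((Ψminv t) * (deriv Ψm t) * (Ψminv t))) t hmi_d)
      (hmatinv _ _ (hid_m1 t)) (hmatinv _ _ (hid_m2 t))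
  have md4 : HasDerivAt (fun s => (Lmat (Ψp s)).det)
      ((Lmat (Ψp t)).det * (Lmat (Ψpinv t) * Lmat (deriv Ψp t)).trace) t :=
    det_hasDerivAt _ _ _ t (hentry Ψp (deriv Ψp t) t (hdp t).hasDerivAt)
      (hmatinv _ _ (hid_p2 t)) (hmatinv _ _ (hid_p1 t))
  have hprod : HasDerivAt
      (fun s => (Lmat (Ψbm s)).det *
        ((Lmat (Ψbpinv s)).det * ((Lmat (Ψminv s)).det * (Lmat (Ψp s)).det)))
      ((Lmat (Ψbm t)).det * (Lmat (Ψbminv t) * Lmat (deriv Ψbm t)).trace *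
          ((Lmat (Ψbpinv t)).det * ((Lmat (Ψminv t)).det * (Lmat (Ψp t)).det)) +
        (Lmat (Ψbm t)).det *
          ((Lmat (Ψbpinv t)).det * (Lmat (Ψbp t) * Lmat (-((Ψbpinv t) * (deriv Ψbp t) * (Ψbpinv t)))).trace *
              ((Lmat (Ψminv t)).det * (Lmat (Ψp t)).det) +
            (Lmat (Ψbpinv t)).det *
              ((Lmat (Ψminv t)).det * (Lmat (Ψm t) * Lmat (-((Ψminv t) * (deriv Ψm t) * (Ψminv t)))).trace * (Lmat (Ψp t)).det +
                (Lmat (Ψminv t)).det * ((Lmat (Ψp t)).det * (Lmat (Ψpinv t) * Lmat (deriv Ψp t)).trace)))) t :=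
    md1.mul (md2.mul (md3.mul md4))
  have hder : HasDerivAt τ
      ((Lmat (Ψbm t)).det * (Lmat (Ψbminv t) * Lmat (deriv Ψbm t)).trace *
          ((Lmat (Ψbpinv t)).det * ((Lmat (Ψminv t)).det * (Lmat (Ψp t)).det)) +
        (Lmat (Ψbm t)).det *
          ((Lmat (Ψbpinv t)).det * (Lmat (Ψbp t) * Lmat (-((Ψbpinv t) * (deriv Ψbp t) * (Ψbpinv t)))).trace *
              ((Lmat (Ψminv t)).det * (Lmat (Ψp t)).det) +
            (Lmat (Ψbpinv t)).det *
              ((Lmat (Ψminv t)).det * (Lmat (Ψm t) * Lmat (-((Ψminv t) * (deriv Ψm t) * (Ψminv t)))).trace * (Lmat (Ψp t)).det +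
                (Lmat (Ψminv t)).det * ((Lmat (Ψp t)).det * (Lmat (Ψpinv t) * Lmat (deriv Ψp t)).trace)))) t := by
    rw [show τ = (fun s => (Lmat (Ψbm s)).det *
        ((Lmat (Ψbpinv s)).det * ((Lmat (Ψminv s)).det * (Lmat (Ψp s)).det)))
      from funext hdet4]
    exact hprod
  -- reduction of the four matrix traces
  have hT1 : (Lmat (Ψbminv t) * Lmat (deriv Ψbm t)).trace = trl ((Ψbminv t) * (deriv Ψbm t) * P) := by
    rw [hmat_trace]
    calc trl ((Ψbminv t) * P * (deriv Ψbm t) * P) = trl (P * ((Ψbminv t) * P * (deriv Ψbm t))) := htr_mul _ _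
      _ = trl (P * ((Ψbminv t) * (deriv Ψbm t))) := by
          refine congrArg trl (ContinuousLinearMap.ext fun y => ?_)
          simp only [ContinuousLinearMap.mul_apply, gqmi]
      _ = trl ((Ψbminv t) * (deriv Ψbm t) * P) := htr_mul _ _
  have hT2 : (Lmat (Ψbp t) * Lmat (-((Ψbpinv t) * (deriv Ψbp t) * (Ψbpinv t)))).trace = -trl ((Ψbpinv t) * (deriv Ψbp t) * P) := by
    rw [hmat_trace]
    rw [show (Ψbp t) * P * -((Ψbpinv t) * (deriv Ψbp t) * (Ψbpinv t)) * P = -((Ψbp t) * P * ((Ψbpinv t) * (deriv Ψbp t) * (Ψbpinv t)) * P) from by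
      simp only [mul_neg, neg_mul], htr_neg, neg_inj]
    calc trl ((Ψbp t) * P * ((Ψbpinv t) * (deriv Ψbp t) * (Ψbpinv t)) * P)
        = trl (((Ψbp t) * P * ((Ψbpinv t) * (deriv Ψbp t))) * ((Ψbpinv t) * P)) := by
          exact congrArg trl (ContinuousLinearMap.ext fun y => by simp only [ContinuousLinearMap.mul_apply])
      _ = trl (((Ψbpinv t) * P) * ((Ψbp t) * P * ((Ψbpinv t) * (deriv Ψbp t)))) := htr_mul _ _
      _ = trl (P * ((Ψbpinv t) * (deriv Ψbp t))) := by
          refine congrArg trl (ContinuousLinearMap.ext fun y => ?_)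
          simp only [ContinuousLinearMap.mul_apply, fqp, iqpiqp]
      _ = trl ((Ψbpinv t) * (deriv Ψbp t) * P) := htr_mul _ _
  have hT3 : (Lmat (Ψm t) * Lmat (-((Ψminv t) * (deriv Ψm t) * (Ψminv t)))).trace = -trl ((deriv Ψm t) * (Ψminv t) * P) := by
    rw [hmat_trace]
    rw [show (Ψm t) * P * -((Ψminv t) * (deriv Ψm t) * (Ψminv t)) * P = -((Ψm t) * P * ((Ψminv t) * (deriv Ψm t) * (Ψminv t)) * P) from by
      simp only [mul_neg, neg_mul], htr_neg, neg_inj]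
    calc trl ((Ψm t) * P * ((Ψminv t) * (deriv Ψm t) * (Ψminv t)) * P)
        = trl (P * ((Ψm t) * P * ((Ψminv t) * (deriv Ψm t) * (Ψminv t)))) := htr_mul _ _
      _ = trl (P * ((deriv Ψm t) * (Ψminv t))) := by
          refine congrArg trl (ContinuousLinearMap.ext fun y => ?_)
          simp only [ContinuousLinearMap.mul_apply, gmm, immi]
      _ = trl ((deriv Ψm t) * (Ψminv t) * P) := htr_mul _ _
  have hT4 : (Lmat (Ψpinv t) * Lmat (deriv Ψp t)).trace = trl ((Ψpinv t) * P * (deriv Ψp t)) := by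
    rw [hmat_trace]
    calc trl ((Ψpinv t) * P * (deriv Ψp t) * P) = trl (P * ((Ψpinv t) * P * (deriv Ψp t))) := htr_mul _ _
      _ = trl (((Ψpinv t) * P) * (deriv Ψp t)) := by
          refine congrArg trl (ContinuousLinearMap.ext fun y => ?_)
          simp only [ContinuousLinearMap.mul_apply, fpi]
  -- the two representations of J⁻¹ J'
  have hDdir : Jinv t * deriv J t = (Ψpinv t) * (deriv Ψp t) - (Ψpinv t) * ((deriv Ψm t) * ((Ψminv t) * (Ψp t))) := by
    rw [hderivJ, hJinv' t]
    ext y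
    simp only [ContinuousLinearMap.mul_apply, ContinuousLinearMap.add_apply,
      ContinuousLinearMap.sub_apply, ContinuousLinearMap.neg_apply, map_add, map_neg, immi]
    abel
  have hDdual : Jinv t * deriv J t = (Ψbm t) * ((Ψbpinv t) * ((deriv Ψbp t) * (Ψbminv t))) - (deriv Ψbm t) * (Ψbminv t) := by
    rw [hderivJ, huniq, hJinv2 t]
    ext y
    simp only [ContinuousLinearMap.mul_apply, ContinuousLinearMap.add_apply,
      ContinuousLinearMap.sub_apply, ContinuousLinearMap.neg_apply, map_add, map_neg,
      iqpiqp, iqmqmi]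
    abel
  -- the four pieces of the target trace
  have w1 : trl (((Ψpinv t) * (deriv Ψp t)) * ((Ψpinv t) ∘L P ∘L (Ψp t))) = trl ((Ψpinv t) * P * (deriv Ψp t)) := by
    calc trl (((Ψpinv t) * (deriv Ψp t)) * ((Ψpinv t) ∘L P ∘L (Ψp t)))
        = trl (((Ψpinv t) ∘L P ∘L (Ψp t)) * ((Ψpinv t) * (deriv Ψp t))) := htr_mul _ _
      _ = trl (((Ψpinv t) * P) * (deriv Ψp t)) := by
          refine congrArg trl (ContinuousLinearMap.ext fun y => ?_)
          simp only [ContinuousLinearMap.mul_apply, ContinuousLinearMap.comp_apply, ippi]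
  have w2 : trl (((Ψpinv t) * ((deriv Ψm t) * ((Ψminv t) * (Ψp t)))) * ((Ψpinv t) ∘L P ∘L (Ψp t))) = trl ((deriv Ψm t) * (Ψminv t) * P) := by
    calc trl (((Ψpinv t) * ((deriv Ψm t) * ((Ψminv t) * (Ψp t)))) * ((Ψpinv t) ∘L P ∘L (Ψp t)))
        = trl (((Ψpinv t) ∘L P ∘L (Ψp t)) * ((Ψpinv t) * ((deriv Ψm t) * ((Ψminv t) * (Ψp t))))) := htr_mul _ _
      _ = trl (((Ψpinv t) * (P * ((deriv Ψm t) * (Ψminv t)))) * (Ψp t)) := by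
          refine congrArg trl (ContinuousLinearMap.ext fun y => ?_)
          simp only [ContinuousLinearMap.mul_apply, ContinuousLinearMap.comp_apply, ippi]
      _ = trl ((Ψp t) * ((Ψpinv t) * (P * ((deriv Ψm t) * (Ψminv t))))) := htr_mul _ _
      _ = trl (P * ((deriv Ψm t) * (Ψminv t))) := by
          refine congrArg trl (ContinuousLinearMap.ext fun y => ?_)
          simp only [ContinuousLinearMap.mul_apply, ippi]
      _ = trl ((deriv Ψm t) * (Ψminv t) * P) := htr_mul _ _
  have w3 : trl (((Ψbm t) * ((Ψbpinv t) * ((deriv Ψbp t) * (Ψbminv t)))) * ((Ψbm t) ∘L (1 - P) ∘L (Ψbminv t)))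
      = trl ((Ψbpinv t) * (deriv Ψbp t)) - trl ((Ψbpinv t) * (deriv Ψbp t) * P) := by
    calc trl (((Ψbm t) * ((Ψbpinv t) * ((deriv Ψbp t) * (Ψbminv t)))) * ((Ψbm t) ∘L (1 - P) ∘L (Ψbminv t)))
        = trl ((Ψbm t) * ((Ψbpinv t) * ((deriv Ψbp t) * ((1 - P) * (Ψbminv t))))) := by
          refine congrArg trl (ContinuousLinearMap.ext fun y => ?_)
          simp only [ContinuousLinearMap.mul_apply, ContinuousLinearMap.comp_apply,
            ContinuousLinearMap.sub_apply, ContinuousLinearMap.one_apply, iqmiqm]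
      _ = trl (((Ψbpinv t) * ((deriv Ψbp t) * ((1 - P) * (Ψbminv t)))) * (Ψbm t)) := htr_mul _ _
      _ = trl ((Ψbpinv t) * (deriv Ψbp t) * (1 - P)) := by
          refine congrArg trl (ContinuousLinearMap.ext fun y => ?_)
          simp only [ContinuousLinearMap.mul_apply, ContinuousLinearMap.sub_apply,
            ContinuousLinearMap.one_apply, map_sub, iqmiqm]
      _ = trl ((Ψbpinv t) * (deriv Ψbp t) * 1) - trl ((Ψbpinv t) * (deriv Ψbp t) * P) := by rw [mul_sub, htr_sub]
      _ = trl ((Ψbpinv t) * (deriv Ψbp t)) - trl ((Ψbpinv t) * (deriv Ψbp t) * P) := by rw [mul_one]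
  have w4 : trl (((deriv Ψbm t) * (Ψbminv t)) * ((Ψbm t) ∘L (1 - P) ∘L (Ψbminv t)))
      = trl ((deriv Ψbm t) * (Ψbminv t)) - trl ((Ψbminv t) * (deriv Ψbm t) * P) := by
    calc trl (((deriv Ψbm t) * (Ψbminv t)) * ((Ψbm t) ∘L (1 - P) ∘L (Ψbminv t)))
        = trl ((deriv Ψbm t) * ((1 - P) * (Ψbminv t))) := by
          refine congrArg trl (ContinuousLinearMap.ext fun y => ?_)
          simp only [ContinuousLinearMap.mul_apply, ContinuousLinearMap.comp_apply,
            ContinuousLinearMap.sub_apply, ContinuousLinearMap.one_apply, iqmiqm]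
      _ = trl ((deriv Ψbm t) * (Ψbminv t) - (deriv Ψbm t) * (P * (Ψbminv t))) := by
          refine congrArg trl (ContinuousLinearMap.ext fun y => ?_)
          simp only [ContinuousLinearMap.mul_apply, ContinuousLinearMap.sub_apply,
            ContinuousLinearMap.one_apply, map_sub]
      _ = trl ((deriv Ψbm t) * (Ψbminv t)) - trl ((deriv Ψbm t) * (P * (Ψbminv t))) := htr_sub _ _
      _ = trl ((deriv Ψbm t) * (Ψbminv t)) - trl ((Ψbminv t) * (deriv Ψbm t) * P) := by
          have hcc : trl ((deriv Ψbm t) * (P * (Ψbminv t))) = trl ((Ψbminv t) * (deriv Ψbm t) * P) := by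
            calc trl ((deriv Ψbm t) * (P * (Ψbminv t))) = trl ((P * (Ψbminv t)) * (deriv Ψbm t)) := htr_mul _ _
              _ = trl (P * ((Ψbminv t) * (deriv Ψbm t))) := by
                  exact congrArg trl (ContinuousLinearMap.ext fun y => by simp only [ContinuousLinearMap.mul_apply])
              _ = trl ((Ψbminv t) * (deriv Ψbm t) * P) := htr_mul _ _
          rw [hcc]
  have w5 : trl ((Ψbm t) * ((Ψbpinv t) * ((deriv Ψbp t) * (Ψbminv t)))) = trl ((Ψbpinv t) * (deriv Ψbp t)) := by
    calc trl ((Ψbm t) * ((Ψbpinv t) * ((deriv Ψbp t) * (Ψbminv t))))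
        = trl (((Ψbpinv t) * ((deriv Ψbp t) * (Ψbminv t))) * (Ψbm t)) := htr_mul _ _
      _ = trl ((Ψbpinv t) * (deriv Ψbp t)) := by
          refine congrArg trl (ContinuousLinearMap.ext fun y => ?_)
          simp only [ContinuousLinearMap.mul_apply, iqmiqm]
  -- expansion of the target trace
  have p1 : trl (Jinv t * deriv J t * ((Ψpinv t) ∘L P ∘L (Ψp t)))
      = trl ((Ψpinv t) * P * (deriv Ψp t)) - trl ((deriv Ψm t) * (Ψminv t) * P) := by
    rw [hDdir, sub_mul, htr_sub, w1, w2]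
  have p2 : trl (Jinv t * deriv J t * P)
      = trl (((Ψpinv t) * (deriv Ψp t)) * P) - trl (((Ψpinv t) * ((deriv Ψm t) * ((Ψminv t) * (Ψp t)))) * P) := by
    rw [hDdir, sub_mul, htr_sub]
  have p3 : trl (Jinv t * deriv J t * ((Ψbm t) ∘L (1 - P) ∘L (Ψbminv t)))
      = (trl ((Ψbpinv t) * (deriv Ψbp t)) - trl ((Ψbpinv t) * (deriv Ψbp t) * P))
        - (trl ((deriv Ψbm t) * (Ψbminv t)) - trl ((Ψbminv t) * (deriv Ψbm t) * P)) := by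
    rw [hDdual, sub_mul, htr_sub, w3, w4]
  have p4 : trl (Jinv t * deriv J t * (1 - P))
      = (trl ((Ψbpinv t) * (deriv Ψbp t)) - trl ((deriv Ψbm t) * (Ψbminv t)))
        - (trl (((Ψpinv t) * (deriv Ψp t)) * P) - trl (((Ψpinv t) * ((deriv Ψm t) * ((Ψminv t) * (Ψp t)))) * P)) := by
    have hA : trl (Jinv t * deriv J t)
        = trl ((Ψbpinv t) * (deriv Ψbp t)) - trl ((deriv Ψbm t) * (Ψbminv t)) := by
      rw [hDdual, htr_sub, w5]
    have hB : trl (Jinv t * deriv J t * P)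
        = trl (((Ψpinv t) * (deriv Ψp t)) * P)
          - trl (((Ψpinv t) * ((deriv Ψm t) * ((Ψminv t) * (Ψp t)))) * P) := by
      rw [hDdir, sub_mul, htr_sub]
    rw [mul_sub, mul_one, htr_sub, hA, hB]
  have e1 : Jinv t * deriv J t * (((Ψpinv t) ∘L P ∘L (Ψp t)) - P + ((Ψbm t) ∘L (1 - P) ∘L (Ψbminv t)) - (1 - P))
      = Jinv t * deriv J t * ((Ψpinv t) ∘L P ∘L (Ψp t)) - Jinv t * deriv J t * P
        + Jinv t * deriv J t * ((Ψbm t) ∘L (1 - P) ∘L (Ψbminv t)) - Jinv t * deriv J t * (1 - P) := by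
    rw [mul_sub, mul_add, mul_sub]
  have hgoal : LinearMap.trace ℂ V
      ((Jinv t ∘L deriv J t ∘L
        (((Ψpinv t) ∘L P ∘L (Ψp t)) - P + ((Ψbm t) ∘L (1 - P) ∘L (Ψbminv t)) - (1 - P))).toLinearMap)
      = trl ((Ψbminv t) * (deriv Ψbm t) * P) - trl ((Ψbpinv t) * (deriv Ψbp t) * P) - trl ((deriv Ψm t) * (Ψminv t) * P) + trl ((Ψpinv t) * P * (deriv Ψp t)) := by
    have h0 : LinearMap.trace ℂ V
        ((Jinv t ∘L deriv J t ∘L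
          (((Ψpinv t) ∘L P ∘L (Ψp t)) - P + ((Ψbm t) ∘L (1 - P) ∘L (Ψbminv t)) - (1 - P))).toLinearMap)
        = trl (Jinv t * deriv J t *
            (((Ψpinv t) ∘L P ∘L (Ψp t)) - P + ((Ψbm t) ∘L (1 - P) ∘L (Ψbminv t)) - (1 - P))) := by
      rw [show Jinv t * deriv J t *
            (((Ψpinv t) ∘L P ∘L (Ψp t)) - P + ((Ψbm t) ∘L (1 - P) ∘L (Ψbminv t)) - (1 - P))
          = Jinv t ∘L deriv J t ∘L
            (((Ψpinv t) ∘L P ∘L (Ψp t)) - P + ((Ψbm t) ∘L (1 - P) ∘L (Ψbminv t)) - (1 - P)) from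
        (mul_assoc _ _ _).symm]
    rw [h0, e1, htr_sub, htr_add, htr_sub, p1, p2, p3, p4]
    ring
  have hfinal : LinearMap.trace ℂ V
      ((Jinv t ∘L deriv J t ∘L
        (((Ψpinv t) ∘L P ∘L (Ψp t)) - P + ((Ψbm t) ∘L (1 - P) ∘L (Ψbminv t)) - (1 - P))).toLinearMap)
      * τ t
      = (Lmat (Ψbm t)).det * (Lmat (Ψbminv t) * Lmat (deriv Ψbm t)).trace *
          ((Lmat (Ψbpinv t)).det * ((Lmat (Ψminv t)).det * (Lmat (Ψp t)).det)) +
        (Lmat (Ψbm t)).det *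
          ((Lmat (Ψbpinv t)).det * (Lmat (Ψbp t) * Lmat (-((Ψbpinv t) * (deriv Ψbp t) * (Ψbpinv t)))).trace *
              ((Lmat (Ψminv t)).det * (Lmat (Ψp t)).det) +
            (Lmat (Ψbpinv t)).det *
              ((Lmat (Ψminv t)).det * (Lmat (Ψm t) * Lmat (-((Ψminv t) * (deriv Ψm t) * (Ψminv t)))).trace * (Lmat (Ψp t)).det +
                (Lmat (Ψminv t)).det * ((Lmat (Ψp t)).det * (Lmat (Ψpinv t) * Lmat (deriv Ψp t)).trace))) := by
    rw [hgoal, hdet4 t, hT1, hT2, hT3, hT4]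
    ring
  rw [hfinal]
  exact hder
end

section
/- Let V be a complex vector space with direct sum decomposition V = V₊ ⊕ V₋ and Π the projection onto V₊ along V₋. Let Ψ̄₊ be an invertible endomorphism of V preserving V₊ (i.e. Ψ̄₊(V₊) ⊆ V₊ and Ψ̄₊⁻¹(V₊) ⊆ V₊) and Ψ̄₋ an invertible endomorphism preserving V₋, and set J := Ψ̄₊ ∘ Ψ̄₋⁻¹. Then the endomorphism P of V₊ given by P := (Π ∘ J⁻¹) restricted to V₊ is bijective, and its inverse is (Ψ̄₊ ∘ Π ∘ Ψ̄₋⁻¹) restricted to V₊ (which indeed maps V₊ to V₊). -/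
/-- If the dual Riemann–Hilbert factorization `J = Ψ̄₊ ∘ Ψ̄₋⁻¹` exists, then the operator
`P = Π ∘ J⁻¹` is bijective on `V₊` with inverse `Ψ̄₊ ∘ Π ∘ Ψ̄₋⁻¹` (which maps `V₊` to `V₊`). -/
theorem dual_factorization_inverse_of_projected_Jinv
    (V : Type) [AddCommGroup V] [Module ℂ V]
    (Vp Vm : Submodule ℂ V) (hc : IsCompl Vp Vm)
    (Ψbp Ψbm : V ≃ₗ[ℂ] V)
    (hbp : ∀ x ∈ Vp, Ψbp x ∈ Vp) (hbp' : ∀ x ∈ Vp, Ψbp.symm x ∈ Vp)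
    (hbm : ∀ x ∈ Vm, Ψbm x ∈ Vm) (hbm' : ∀ x ∈ Vm, Ψbm.symm x ∈ Vm)
    (P Jinv Q : V →ₗ[ℂ] V)
    (hP : P = Vp.subtype ∘ₗ Vp.linearProjOfIsCompl Vm hc)
    (hJinv : Jinv = Ψbm.toLinearMap ∘ₗ Ψbp.symm.toLinearMap)
    (hQ : Q = Ψbp.toLinearMap ∘ₗ P ∘ₗ Ψbm.symm.toLinearMap) :
    (∀ x ∈ Vp, Q x ∈ Vp) ∧
    Function.Bijective (fun x : Vp => Vp.linearProjOfIsCompl Vm hc (Jinv x)) ∧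
    (∀ x ∈ Vp, Q (P (Jinv x)) = x) ∧
    (∀ x ∈ Vp, P (Jinv (Q x)) = x) := by
  set π := Vp.linearProjOfIsCompl Vm hc with hπ
  -- basic facts about the projection
  have hπp : ∀ v ∈ Vp, (π v : V) = v := fun v hv => by
    have := Submodule.linearProjOfIsCompl_apply_left hc ⟨v, hv⟩
    exact congrArg (Subtype.val) this
  have hπpS : ∀ v (hv : v ∈ Vp), π v = ⟨v, hv⟩ := fun v hv => by
    apply Subtype.ext; exact hπp v hv
  have hπm : ∀ v ∈ Vm, π v = 0 := fun v hv =>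
    Submodule.projectionOnto_apply_of_mem_right hc hv
  have hmem : ∀ v : V, v - (π v : V) ∈ Vm := fun v => by
    have h := Submodule.projection_add_projection_eq_self hc v
    have h2 : v - (π v : V) = (Vm.linearProjOfIsCompl Vp hc.symm v : V) :=
      sub_eq_of_eq_add' h.symm
    rw [h2]; exact (Vm.linearProjOfIsCompl Vp hc.symm v).2
  have hπadd : ∀ v : V, ∀ m ∈ Vm, π (v + m) = π v := fun v m hm => by
    rw [map_add, hπm m hm, add_zero]
  -- compute P, Jinv, Q pointwise
  have hPv : ∀ v : V, P v = (π v : V) := fun v => by rw [hP]; rfl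
  have hJv : ∀ v : V, Jinv v = Ψbm (Ψbp.symm v) := fun v => by rw [hJinv]; rfl
  have hQv : ∀ v : V, Q v = Ψbp (P (Ψbm.symm v)) := fun v => by rw [hQ]; rfl
  -- goal 1
  have g1 : ∀ x ∈ Vp, Q x ∈ Vp := by
    intro x _
    rw [hQv, hPv]
    exact hbp _ (π (Ψbm.symm x)).2
  -- goal 3
  have g3 : ∀ x ∈ Vp, Q (P (Jinv x)) = x := by
    intro x hx
    set y := Ψbp.symm x with hy
    have hyp : y ∈ Vp := hbp' x hx
    set w := Ψbm y with hw
    have hdec : Ψbm.symm ((π w : V)) = y - Ψbm.symm (w - (π w : V)) := by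
      rw [map_sub, hw, LinearEquiv.symm_apply_apply, sub_sub_cancel]
    have hmm : Ψbm.symm (w - (π w : V)) ∈ Vm := hbm' _ (hmem w)
    rw [hQv, hPv, hJv, hPv, ← hy, ← hw, hdec]
    have : π (y - Ψbm.symm (w - (π w : V))) = π y := by
      have := hπadd y (-(Ψbm.symm (w - (π w : V)))) (neg_mem hmm)
      simpa [sub_eq_add_neg] using this
    rw [this, hπpS y hyp]
    simp [hy]
  -- goal 4
  have g4 : ∀ x ∈ Vp, P (Jinv (Q x)) = x := by
    intro x hx
    rw [hQv, hPv, hJv, LinearEquiv.symm_apply_apply, hPv]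
    set u := Ψbm.symm x with hu
    have hdec : Ψbm ((π u : V)) = x - Ψbm (u - (π u : V)) := by
      rw [map_sub, hu, LinearEquiv.apply_symm_apply, sub_sub_cancel]
    have hmm : Ψbm (u - (π u : V)) ∈ Vm := hbm _ (hmem u)
    rw [hdec]
    have : π (x - Ψbm (u - (π u : V))) = π x := by
      have := hπadd x (-(Ψbm (u - (π u : V)))) (neg_mem hmm)
      simpa [sub_eq_add_neg] using this
    rw [this, hπpS x hx]
  -- goal 2: bijectivity
  refine ⟨g1, ?_, g3, g4⟩
  constructor
  · intro a b hab
    have h1 : P (Jinv (a : V)) = P (Jinv (b : V)) := by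
      rw [hPv, hPv]
      exact congrArg Subtype.val hab
    have := congrArg Q h1
    rw [g3 a a.2, g3 b b.2] at this
    exact Subtype.ext this
  · intro b
    refine ⟨⟨Q (b : V), g1 _ b.2⟩, ?_⟩
    apply Subtype.ext
    show (π (Jinv (Q (b : V))) : V) = (b : V)
    rw [← hPv]
    exact g4 _ b.2
end

section
/- Let V be a complex vector space with direct sum decomposition V = V₊ ⊕ V₋ and Π the projection onto V₊ along V₋. Let Ψ₊ be an invertible endomorphism of V preserving V₊ (i.e. Ψ₊(V₊) ⊆ V₊ and Ψ₊⁻¹(V₊) ⊆ V₊) and Ψ₋ an invertible endomorphism preserving V₋, and set J := Ψ₋⁻¹ ∘ Ψ₊. Then the endomorphism Q of V₊ given by Q := (Π ∘ J) restricted to V₊ is bijective, and its inverse is (Ψ₊⁻¹ ∘ Π ∘ Ψ₋) restricted to V₊ (which indeed maps V₊ to V₊). -/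
/-- If the direct Riemann–Hilbert factorization `J = Ψ₋⁻¹ ∘ Ψ₊` exists, then the operator
`Q = Π ∘ J` is bijective on `V₊` with inverse `Ψ₊⁻¹ ∘ Π ∘ Ψ₋` (which maps `V₊` to `V₊`). -/
theorem direct_factorization_inverse_of_projected_J
    (V : Type) [AddCommGroup V] [Module ℂ V]
    (Vp Vm : Submodule ℂ V) (hc : IsCompl Vp Vm)
    (Ψp Ψm : V ≃ₗ[ℂ] V)
    (hp : ∀ x ∈ Vp, Ψp x ∈ Vp) (hp' : ∀ x ∈ Vp, Ψp.symm x ∈ Vp)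
    (hm : ∀ x ∈ Vm, Ψm x ∈ Vm) (hm' : ∀ x ∈ Vm, Ψm.symm x ∈ Vm)
    (P J R : V →ₗ[ℂ] V)
    (hP : P = Vp.subtype ∘ₗ Vp.linearProjOfIsCompl Vm hc)
    (hJ : J = Ψm.symm.toLinearMap ∘ₗ Ψp.toLinearMap)
    (hR : R = Ψp.symm.toLinearMap ∘ₗ P ∘ₗ Ψm.toLinearMap) :
    (∀ x ∈ Vp, R x ∈ Vp) ∧
    Function.Bijective (fun x : Vp => Vp.linearProjOfIsCompl Vm hc (J x)) ∧
    (∀ x ∈ Vp, R (P (J x)) = x) ∧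
    (∀ x ∈ Vp, P (J (R x)) = x) := by
  set f := Vp.linearProjOfIsCompl Vm hc with hf
  -- basic facts about the projection
  have hPval : ∀ y : V, P y = (f y : V) := by
    intro y; rw [hP]; rfl
  have hPmem : ∀ y : V, P y ∈ Vp := by
    intro y; rw [hPval]; exact (f y).2
  have hPleft : ∀ x ∈ Vp, P x = x := by
    intro x hx
    rw [hPval]
    exact congrArg _ (Submodule.linearProjOfIsCompl_apply_left hc ⟨x, hx⟩)
  have hPright : ∀ m ∈ Vm, P m = 0 := by
    intro m hm0
    rw [hPval, show f m = 0 from Submodule.projectionOnto_apply_of_mem_right hc hm0]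
    simp
  have hsub : ∀ y : V, y - P y ∈ Vm := by
    intro y
    rw [hPval]
    have h0 : (f y : V) + (Vm.linearProjOfIsCompl Vp hc.symm y : V) = y :=
      Submodule.projection_add_projection_eq_self hc y
    have h2 : y - (f y : V) = (Vm.linearProjOfIsCompl Vp hc.symm y : V) :=
      sub_eq_iff_eq_add'.mpr h0.symm
    rw [h2]; exact (Vm.linearProjOfIsCompl Vp hc.symm y).2
  -- first claim
  have hRmem : ∀ x : V, R x ∈ Vp := by
    intro x
    rw [hR]
    exact hp' _ (hPmem (Ψm x))
  -- third claim
  have hRPJ : ∀ x ∈ Vp, R (P (J x)) = x := by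
    intro x hx
    have hm1 : Ψm (J x - P (J x)) ∈ Vm := hm _ (hsub (J x))
    have h1 : Ψm (P (J x)) = Ψp x - Ψm (J x - P (J x)) := by
      have : Ψm (J x) = Ψp x := by
        rw [hJ]; simp
      rw [map_sub, this]; abel
    have h2 : P (Ψm (P (J x))) = Ψp x := by
      rw [h1, map_sub, hPright _ hm1, hPleft _ (hp x hx), sub_zero]
    rw [hR]
    simp only [LinearMap.coe_comp, Function.comp_apply, LinearEquiv.coe_coe]
    rw [h2]; simp
  -- fourth claim
  have hPJR : ∀ x ∈ Vp, P (J (R x)) = x := by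
    intro x hx
    have hm1 : Ψm.symm (Ψm x - P (Ψm x)) ∈ Vm := hm' _ (hsub (Ψm x))
    have h1 : J (R x) = x - Ψm.symm (Ψm x - P (Ψm x)) := by
      rw [hR, hJ]
      simp only [LinearMap.coe_comp, Function.comp_apply, LinearEquiv.coe_coe]
      rw [LinearEquiv.apply_symm_apply, map_sub, LinearEquiv.symm_apply_apply]
      abel
    rw [h1, map_sub, hPright _ hm1, hPleft _ hx, sub_zero]
  refine ⟨fun x _ => hRmem x, ?_, hRPJ, hPJR⟩
  -- bijectivity
  constructor
  · intro a b hab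
    have h1 : ((f (J ↑a) : V)) = ((f (J ↑b) : V)) := congrArg (fun z : Vp => (z : V)) hab
    rw [← hPval, ← hPval] at h1
    have h2 := congrArg R h1
    rw [hRPJ a a.2, hRPJ b b.2] at h2
    exact Subtype.ext h2
  · intro y
    refine ⟨⟨R y, hRmem y⟩, ?_⟩
    apply Subtype.ext
    show (f (J (R ↑y)) : V) = ↑y
    rw [← hPval]
    exact hPJR y y.2
end

section
/- Let R > 1, let Ψ : D_R → Mat_N(ℂ) be analytic on the disk D_R = {z : |z| < R} with Ψ(z) invertible for every z, and let g : D_R → ℂ^N be analytic. Let F : D_R × D_R → Mat_N(ℂ) be the analytic extension of the Cauchy–Plemelj kernel, i.e. F(z,z') = (1 − Ψ(z)Ψ(z')⁻¹)/(z − z') for z ≠ z' and F(z,z) = −Ψ'(z)Ψ(z)⁻¹. Then for every z₀ with |z₀| = 1, the contour integral over the unit circle ∮_{|w|=1} F(z₀, w)·g(w) dw equals 0. -/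
open Metric Set Matrix

private lemma det_analytic_aux {N : ℕ} {S : Set ℂ} {M : ℂ → Matrix (Fin N) (Fin N) ℂ}
    (h : ∀ i j, AnalyticOnNhd ℂ (fun z => M z i j) S) :
    AnalyticOnNhd ℂ (fun z => (M z).det) S := by
  simp_rw [Matrix.det_apply']
  refine Finset.analyticOnNhd_fun_sum _ (fun σ _ => ?_)
  exact analyticOnNhd_const.mul
    (Finset.analyticOnNhd_fun_prod _ (fun i _ => h (σ i) i))

private lemma inv_entry_analytic_aux {N : ℕ} {S : Set ℂ} {M : ℂ → Matrix (Fin N) (Fin N) ℂ}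
    (h : ∀ i j, AnalyticOnNhd ℂ (fun z => M z i j) S)
    (hu : ∀ z ∈ S, IsUnit (M z)) (i j : Fin N) :
    AnalyticOnNhd ℂ (fun z => (M z)⁻¹ i j) S := by
  have hdet := det_analytic_aux h
  have hdet0 : ∀ z ∈ S, (M z).det ≠ 0 := fun z hz =>
    ((Matrix.isUnit_iff_isUnit_det _).mp (hu z hz)).ne_zero
  have hadj : AnalyticOnNhd ℂ (fun z => (M z).adjugate i j) S := by
    simp_rw [Matrix.adjugate_apply]
    refine det_analytic_aux (fun k l => ?_)
    simp_rw [Matrix.updateRow_apply]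
    by_cases hk : k = j
    · simp only [if_pos hk]
      exact analyticOnNhd_const
    · simp only [if_neg hk]
      exact h k l
  have hrw : ∀ z, (M z)⁻¹ i j = ((M z).det)⁻¹ * (M z).adjugate i j := by
    intro z
    rw [Matrix.inv_def, Matrix.smul_apply, Ring.inverse_eq_inv, smul_eq_mul]
  simp_rw [hrw]
  exact (hdet.inv hdet0).mul hadj

/-- The Cauchy–Plemelj operator with kernel `F(z,z') = (1 - Ψ(z)Ψ(z')⁻¹)/(z - z')`
annihilates boundary values of functions analytic inside the unit circle:
for `g` analytic on the disk `D_R` (`R > 1`), `∮_{|w|=1} F(z₀, w)·g(w) dw = 0`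
for every `z₀` on the unit circle. -/
theorem cauchyPlemelj_annihilates_interior_analytic (N : ℕ) (R : ℝ) (hR : 1 < R)
    (Ψ : ℂ → Matrix (Fin N) (Fin N) ℂ)
    (hΨ : ∀ i j, AnalyticOnNhd ℂ (fun z => Ψ z i j) (Metric.ball (0 : ℂ) R))
    (hinv : ∀ z ∈ Metric.ball (0 : ℂ) R, IsUnit (Ψ z))
    (g : ℂ → Fin N → ℂ)
    (hg : ∀ i, AnalyticOnNhd ℂ (fun z => g z i) (Metric.ball (0 : ℂ) R))
    (F : ℂ → ℂ → Matrix (Fin N) (Fin N) ℂ)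
    (hF1 : ∀ z ∈ Metric.ball (0 : ℂ) R, ∀ z' ∈ Metric.ball (0 : ℂ) R, z ≠ z' →
      F z z' = (z - z')⁻¹ • (1 - Ψ z * (Ψ z')⁻¹))
    (hF2 : ∀ z ∈ Metric.ball (0 : ℂ) R,
      F z z = -((Matrix.of fun i j => deriv (fun w => Ψ w i j) z) * (Ψ z)⁻¹)) :
    ∀ z₀ : ℂ, ‖z₀‖ = 1 →
      (∮ w in C(0, 1), (F z₀ w).mulVec (g w)) = 0 := by
  intro z₀ hz₀
  set S := Metric.ball (0 : ℂ) R with hS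
  have hSopen : IsOpen S := isOpen_ball
  have hz₀S : z₀ ∈ S := by
    simp only [hS, Metric.mem_ball, Complex.dist_eq, sub_zero, hz₀]
    exact hR
  have hballS : Metric.ball (0 : ℂ) 1 ⊆ S := Metric.ball_subset_ball hR.le
  have hcbS : Metric.closedBall (0 : ℂ) 1 ⊆ S := Metric.closedBall_subset_ball hR
  have hdetu : ∀ z ∈ S, IsUnit (Ψ z).det := fun z hz =>
    (Matrix.isUnit_iff_isUnit_det _).mp (hinv z hz)
  have hmulinv : ∀ z ∈ S, Ψ z * (Ψ z)⁻¹ = 1 := fun z hz =>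
    Matrix.mul_nonsing_inv _ (hdetu z hz)
  have hinvA : ∀ i j, AnalyticOnNhd ℂ (fun z => (Ψ z)⁻¹ i j) S :=
    inv_entry_analytic_aux hΨ hinv
  set v : ℂ → Fin N → ℂ := fun w => ((Ψ w)⁻¹).mulVec (g w) with hv
  have hvA : ∀ k, AnalyticOnNhd ℂ (fun w => v w k) S := by
    intro k
    simp only [hv, Matrix.mulVec, dotProduct]
    exact Finset.analyticOnNhd_fun_sum _ (fun j _ => (hinvA k j).mul (hg j))
  set H : ℂ → Fin N → ℂ :=
    fun w i => -∑ k, dslope (fun z => Ψ z i k) z₀ w * v w k with hH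
  -- Key identity: the integrand agrees with H on S.
  have key : ∀ w ∈ S, (F z₀ w).mulVec (g w) = H w := by
    intro w hw
    funext i
    rcases eq_or_ne w z₀ with rfl | hne
    · rw [hF2 _ hw, Matrix.neg_mulVec, ← Matrix.mulVec_mulVec]
      simp only [hH, dslope_same, Pi.neg_apply, Matrix.mulVec, dotProduct,
        Matrix.of_apply, hv]
    · rw [hF1 z₀ hz₀S w hw (Ne.symm hne)]
      have h1 : (1 : Matrix (Fin N) (Fin N) ℂ) - Ψ z₀ * (Ψ w)⁻¹ = (Ψ w - Ψ z₀) * (Ψ w)⁻¹ := by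
        rw [Matrix.sub_mul, hmulinv w hw]
      rw [h1]
      have hw0 : w - z₀ ≠ 0 := sub_ne_zero.mpr hne
      rw [Matrix.smul_mulVec, ← Matrix.mulVec_mulVec, Matrix.sub_mulVec]
      simp only [hH, dslope_of_ne _ hne, slope_def_field, Pi.smul_apply, smul_eq_mul,
        Pi.sub_apply, Matrix.mulVec, dotProduct, hv]
      rw [← Finset.sum_sub_distrib, Finset.mul_sum, ← Finset.sum_neg_distrib]
      refine Finset.sum_congr rfl (fun k _ => ?_)
      rw [← neg_sub w z₀, inv_neg, div_eq_mul_inv]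
      ring
  -- H is continuous on S.
  have hHcont : ContinuousOn H S := by
    intro b hb
    refine (continuousAt_pi' (fun i => ?_)).continuousWithinAt
    refine ContinuousAt.neg ?_
    have : ∀ k : Fin N, ContinuousAt (fun w => dslope (fun z => Ψ z i k) z₀ w * v w k) b := by
      intro k
      refine ContinuousAt.mul ?_ ((hvA k b hb).continuousAt)
      rcases eq_or_ne b z₀ with rfl | hbne
      · exact (continuousAt_dslope_same).mpr (hΨ i k b hb).differentiableAt
      · exact (continuousAt_dslope_of_ne hbne).mpr (hΨ i k b hb).continuousAt
    exact tendsto_finset_sum _ (fun k _ => this k)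
  -- H is differentiable at every point of the open unit ball.
  have hHdiff : ∀ b ∈ Metric.ball (0 : ℂ) 1, DifferentiableAt ℂ H b := by
    intro b hb
    have hbS : b ∈ S := hballS hb
    have hbne : b ≠ z₀ := by
      intro h
      rw [h] at hb
      simp only [Metric.mem_ball, Complex.dist_eq, sub_zero, hz₀] at hb
      exact lt_irrefl 1 hb
    refine differentiableAt_pi.mpr (fun i => ?_)
    refine DifferentiableAt.neg ?_
    refine DifferentiableAt.fun_sum (fun k _ => ?_)
    refine DifferentiableAt.mul ?_ ((hvA k b hbS).differentiableAt)
    have hev : (fun w => dslope (fun z => Ψ z i k) z₀ w)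
        =ᶠ[nhds b] (fun w => (Ψ w i k - Ψ z₀ i k) / (w - z₀)) := by
      filter_upwards [isOpen_compl_singleton.mem_nhds hbne] with w hw
      rw [dslope_of_ne _ hw, slope_def_field]
    refine (Filter.EventuallyEq.differentiableAt_iff hev).mpr ?_
    exact DifferentiableAt.div ((hΨ i k b hbS).differentiableAt.sub (differentiableAt_const _))
      (differentiableAt_id.sub (differentiableAt_const _)) (sub_ne_zero.mpr hbne)
  -- Conclude with the Cauchy–Goursat theorem.
  have hcont : ContinuousOn (fun w => (F z₀ w).mulVec (g w)) (Metric.closedBall (0 : ℂ) 1) :=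
    (hHcont.mono hcbS).congr (fun w hw => key w (hcbS hw))
  have hzero := Complex.circleIntegral_eq_zero_of_differentiable_on_off_countable
    (zero_le_one) (Set.countable_empty) hcont (fun z hz => by
      have hzb : z ∈ Metric.ball (0 : ℂ) 1 := hz.1
      refine (hHdiff z hzb).congr_of_eventuallyEq ?_
      filter_upwards [hSopen.mem_nhds (hballS hzb)] with w hw
      exact key w hw)
  exact hzero
end

section
/- Let 0 < r < 1 and let Ψ be an analytic map from U_r = {z ∈ ℂ : |z| > r} to invertible N×N complex matrices such that t ↦ Ψ(1/t) extends to an analytic function on {|t| < 1/r} whose value at t = 0 is invertible. Let g : U_r → ℂ^N be analytic such that t ↦ g(1/t) extends analytically to {|t| < 1/r} with value 0 at t = 0. Let G : U_r × U_r → Mat_N(ℂ) be the analytic extension of the kernel 𝖽(z,z') := (Ψ(z)Ψ(z')⁻¹ − 1)/(z − z'), with diagonal value G(z,z) = Ψ'(z)Ψ(z)⁻¹. Then for every z₀ with |z₀| = 1, the contour integral ∮_{|w|=1} G(z₀, w)·g(w) dw equals 0. -/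
open Complex Metric MeasureTheory intervalIntegral

section helpers

/-- Determinant of an entrywise-analytic matrix family is analytic. -/
lemma analyticOnNhd_det {n : ℕ} {s : Set ℂ} {M : ℂ → Matrix (Fin n) (Fin n) ℂ}
    (h : ∀ i j, AnalyticOnNhd ℂ (fun t => M t i j) s) :
    AnalyticOnNhd ℂ (fun t => (M t).det) s := by
  have : (fun t => (M t).det)
      = fun t => ∑ σ : Equiv.Perm (Fin n),
          ((Equiv.Perm.sign σ : ℤ) : ℂ) * ∏ i, M t (σ i) i := by
    funext t; rw [Matrix.det_apply']
  rw [this]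
  apply Finset.analyticOnNhd_fun_sum
  intro σ _
  exact analyticOnNhd_const.mul (Finset.analyticOnNhd_fun_prod _ (fun i _ => h (σ i) i))

lemma analyticOnNhd_inv_entry {n : ℕ} {s : Set ℂ} {M : ℂ → Matrix (Fin n) (Fin n) ℂ}
    (h : ∀ i j, AnalyticOnNhd ℂ (fun t => M t i j) s)
    (hu : ∀ t ∈ s, IsUnit (M t)) (i j : Fin n) :
    AnalyticOnNhd ℂ (fun t => (M t)⁻¹ i j) s := by
  have hdet : AnalyticOnNhd ℂ (fun t => (M t).det) s := analyticOnNhd_det h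
  have hdet0 : ∀ t ∈ s, (M t).det ≠ 0 := fun t ht =>
    IsUnit.ne_zero ((Matrix.isUnit_iff_isUnit_det (M t)).mp (hu t ht))
  have hadj : AnalyticOnNhd ℂ (fun t => (M t).adjugate i j) s := by
    have : (fun t => (M t).adjugate i j)
        = fun t => ((M t).updateRow j (Pi.single i 1)).det := by
      funext t; rw [Matrix.adjugate_apply]
    rw [this]
    apply analyticOnNhd_det
    intro k l
    rcases eq_or_ne k j with rfl | hk
    · simp only [Matrix.updateRow_apply, if_pos rfl]
      exact analyticOnNhd_const
    · simpa [Matrix.updateRow_apply, hk] using h k l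
  have : (fun t => (M t)⁻¹ i j) = fun t => ((M t).det)⁻¹ * (M t).adjugate i j := by
    funext t
    rw [Matrix.inv_def, Ring.inverse_eq_inv, Matrix.smul_apply, smul_eq_mul]
  rw [this]
  exact (hdet.inv hdet0).mul hadj

lemma AnalyticAt.dslope_analyticAt {f : ℂ → ℂ} {a : ℂ} (hf : AnalyticAt ℂ f a) :
    AnalyticAt ℂ (dslope f a) a := by
  obtain ⟨p, hp⟩ := hf
  exact ⟨p.fslope, hp.has_fpower_series_dslope_fslope⟩

/-- `dslope` of a function analytic on an open set is differentiable there. -/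
lemma dslope_differentiableAt {f : ℂ → ℂ} {s : Set ℂ} {a b : ℂ}
    (hf : AnalyticOnNhd ℂ f s) (ha : a ∈ s) (hb : b ∈ s) :
    DifferentiableAt ℂ (dslope f a) b := by
  rcases eq_or_ne b a with rfl | hba
  · exact (hf b hb).dslope_analyticAt.differentiableAt
  · exact (differentiableAt_dslope_of_ne hba).mpr (hf b hb).differentiableAt

end helpers

/-- The exterior Cauchy–Plemelj operator with kernel
`G(z,z') = (Ψ(z)Ψ(z')⁻¹ - 1)/(z - z')` annihilates boundary values of functions
analytic outside the unit circle that vanish at infinity. -/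
theorem exterior_cauchyPlemelj_annihilates_exterior_analytic
    (N : ℕ) (r : ℝ) (hr0 : 0 < r) (hr1 : r < 1)
    (Ψ : ℂ → Matrix (Fin N) (Fin N) ℂ)
    (hΨ : ∀ i j, AnalyticOnNhd ℂ (fun z => Ψ z i j) {z : ℂ | r < ‖z‖})
    (hinv : ∀ z : ℂ, r < ‖z‖ → IsUnit (Ψ z))
    (Ψext : ℂ → Matrix (Fin N) (Fin N) ℂ)
    (hΨext : ∀ i j, AnalyticOnNhd ℂ (fun t => Ψext t i j) (Metric.ball (0 : ℂ) r⁻¹))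
    (hΨext_eq : ∀ t ∈ Metric.ball (0 : ℂ) r⁻¹, t ≠ 0 → Ψext t = Ψ t⁻¹)
    (hΨext0 : IsUnit (Ψext 0))
    (g : ℂ → Fin N → ℂ)
    (hg : ∀ i, AnalyticOnNhd ℂ (fun z => g z i) {z : ℂ | r < ‖z‖})
    (gext : ℂ → Fin N → ℂ)
    (hgext : ∀ i, AnalyticOnNhd ℂ (fun t => gext t i) (Metric.ball (0 : ℂ) r⁻¹))
    (hgext_eq : ∀ t ∈ Metric.ball (0 : ℂ) r⁻¹, t ≠ 0 → gext t = g t⁻¹)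
    (hgext0 : gext 0 = 0)
    (G : ℂ → ℂ → Matrix (Fin N) (Fin N) ℂ)
    (hG1 : ∀ z z' : ℂ, r < ‖z‖ → r < ‖z'‖ → z ≠ z' →
      G z z' = (z - z')⁻¹ • (Ψ z * (Ψ z')⁻¹ - 1))
    (hG2 : ∀ z : ℂ, r < ‖z‖ →
      G z z = (Matrix.of fun i j => deriv (fun w => Ψ w i j) z) * (Ψ z)⁻¹) :
    ∀ z₀ : ℂ, ‖z₀‖ = 1 →
      (∮ w in C(0, 1), (G z₀ w).mulVec (g w)) = 0 := by
  intro z₀ hz₀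
  have h1r : (1 : ℝ) < r⁻¹ := (one_lt_inv₀ hr0).mpr hr1
  have hz₀r : r < ‖z₀‖ := by rw [hz₀]; exact hr1
  have hz₀0 : z₀ ≠ 0 := by
    intro h; rw [h] at hz₀; simp at hz₀
  -- membership in the ball for points of modulus ≤ 1
  have hmemB : ∀ t : ℂ, ‖t‖ ≤ 1 → t ∈ Metric.ball (0 : ℂ) r⁻¹ := by
    intro t ht
    rw [Metric.mem_ball, Complex.dist_eq, sub_zero]
    exact lt_of_le_of_lt ht h1r
  -- Ψext is everywhere a unit on the ball
  have hu : ∀ t ∈ Metric.ball (0 : ℂ) r⁻¹, IsUnit (Ψext t) := by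
    intro t ht
    rcases eq_or_ne t 0 with rfl | h0
    · exact hΨext0
    · rw [hΨext_eq t ht h0]
      apply hinv
      rw [norm_inv]
      have ht' : ‖t‖ < r⁻¹ := by
        rw [Metric.mem_ball, Complex.dist_eq, sub_zero] at ht; exact ht
      have h0' : 0 < ‖t‖ := by
        simpa [norm_pos_iff] using h0
      calc r = (r⁻¹)⁻¹ := by rw [inv_inv]
        _ < (‖t‖)⁻¹ := by
            exact inv_strictAnti₀ h0' ht'
  -- entries of the inverse of Ψext are analytic
  have hMinv : ∀ i j, AnalyticOnNhd ℂ (fun t => (Ψext t)⁻¹ i j)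
      (Metric.ball (0 : ℂ) r⁻¹) := analyticOnNhd_inv_entry hΨext hu
  -- the matrix kernel numerator
  set M : ℂ → Matrix (Fin N) (Fin N) ℂ := fun t => Ψ z₀ * (Ψext t)⁻¹ - 1 with hMdef
  have hM : ∀ i j, AnalyticOnNhd ℂ (fun t => M t i j) (Metric.ball (0 : ℂ) r⁻¹) := by
    intro i j
    have : (fun t => M t i j)
        = fun t => (∑ k, Ψ z₀ i k * (Ψext t)⁻¹ k j) - (1 : Matrix (Fin N) (Fin N) ℂ) i j := by
      funext t; simp [hMdef, Matrix.sub_apply, Matrix.mul_apply]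
    rw [this]
    exact (Finset.analyticOnNhd_fun_sum _ (fun k _ =>
      analyticOnNhd_const.mul (hMinv k j))).sub analyticOnNhd_const
  set w₀ : ℂ := z₀⁻¹ with hw₀def
  have hw₀B : w₀ ∈ Metric.ball (0 : ℂ) r⁻¹ := by
    apply hmemB; rw [norm_inv, hz₀]; norm_num
  have hw₀0 : w₀ ≠ 0 := inv_ne_zero hz₀0
  have hΨw₀ : Ψext w₀ = Ψ z₀ := by
    rw [hΨext_eq w₀ hw₀B hw₀0, hw₀def, inv_inv]
  have hMw₀ : M w₀ = 0 := by
    rw [hMdef]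
    simp only [hΨw₀]
    rw [Matrix.mul_nonsing_inv _ ((Matrix.isUnit_iff_isUnit_det _).mp (hinv z₀ hz₀r))]
    simp
  -- the analytic continuation of the transformed integrand
  set H : ℂ → Fin N → ℂ := fun t i =>
    z₀⁻¹ * ∑ j, dslope (fun s => M s i j) w₀ t * dslope (fun s => gext s j) 0 t with hHdef
  have h0B : (0 : ℂ) ∈ Metric.ball (0 : ℂ) r⁻¹ := by apply hmemB; simp
  have hHdiff : ∀ t ∈ Metric.ball (0 : ℂ) r⁻¹, DifferentiableAt ℂ H t := by
    intro t ht
    rw [hHdef]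
    apply differentiableAt_pi.mpr
    intro i
    apply DifferentiableAt.const_mul
    apply DifferentiableAt.fun_sum
    intro j _
    exact (dslope_differentiableAt (hM i j) hw₀B ht).mul
      (dslope_differentiableAt (hgext j) h0B ht)
  -- Cauchy: the integral of H over the unit circle vanishes
  have hHzero : (∮ t in C(0, 1), H t) = 0 := by
    apply circleIntegral_eq_zero_of_differentiable_on_off_countable
      zero_le_one Set.countable_empty
    · intro z hz
      have hzB : z ∈ Metric.ball (0 : ℂ) r⁻¹ := by
        apply hmemB
        rw [Metric.mem_closedBall, Complex.dist_eq, sub_zero] at hz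
        exact hz
      exact (hHdiff z hzB).continuousAt.continuousWithinAt
    · intro z hz
      apply hHdiff
      apply hmemB
      have hz1 := hz.1
      rw [Metric.mem_ball, Complex.dist_eq, sub_zero] at hz1
      exact le_of_lt hz1
  rw [← hHzero]
  -- now the substitution w = 1/t
  simp only [circleIntegral, deriv_circleMap]
  set b : ℝ → Fin N → ℂ := fun φ => (circleMap 0 1 φ * I) • H (circleMap 0 1 φ) with hbdef
  have hper : Function.Periodic b (2 * Real.pi) := by
    intro φ; simp only [hbdef, (periodic_circleMap 0 1).eq, periodic_circleMap _ _ φ]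
  have key : (∫ θ in (0 : ℝ)..2 * Real.pi,
        (circleMap 0 1 θ * I) • (G z₀ (circleMap 0 1 θ)).mulVec (g (circleMap 0 1 θ)))
      = ∫ θ in (0 : ℝ)..2 * Real.pi, b (-θ) := by
    apply intervalIntegral.integral_congr_ae
    -- bad set: where circleMap hits z₀
    have hbad : (volume : Measure ℝ) {θ : ℝ | circleMap 0 1 θ = z₀} = 0 := by
      apply Set.Countable.measure_zero
      apply Set.Countable.mono ?_ (Set.countable_range
        (fun n : ℤ => Complex.arg z₀ + n * (2 * Real.pi)))
      intro θ hθ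
      have hθ0 : circleMap 0 1 θ = z₀ := hθ
      have hexpz : Complex.exp (Complex.arg z₀ * I) = z₀ := by
        have := Complex.norm_mul_exp_arg_mul_I z₀
        rw [hz₀] at this
        simpa using this
      have hθ' : Complex.exp (θ * I) = Complex.exp (Complex.arg z₀ * I) := by
        rw [hexpz, ← hθ0]
        simp [circleMap]
      obtain ⟨n, hn⟩ := Complex.exp_eq_exp_iff_exists_int.mp hθ'
      refine ⟨n, ?_⟩
      have hn' : (θ : ℂ) * I = (↑(Complex.arg z₀ + (n : ℝ) * (2 * Real.pi)) : ℂ) * I := by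
        rw [hn]; push_cast; ring
      have hcc := mul_right_cancel₀ Complex.I_ne_zero hn'
      exact_mod_cast hcc.symm
    have h2 : ∀ᵐ θ : ℝ, circleMap 0 1 θ ≠ z₀ :=
      (MeasureTheory.measure_eq_zero_iff_ae_notMem.mp hbad)
    filter_upwards [h2] with θ hθ _
    -- pointwise identity
    set w : ℂ := circleMap 0 1 θ with hwdef
    have habsw : ‖w‖ = 1 := by simp [hwdef, circleMap]
    have hw0 : w ≠ 0 := by
      intro h; rw [h] at habsw; simp at habsw
    have hwr : r < ‖w‖ := by rw [habsw]; exact hr1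
    have hwz₀ : w ≠ z₀ := hθ
    set t : ℂ := w⁻¹ with htdef
    have hmul : circleMap 0 1 θ * circleMap 0 1 (-θ) = 1 := by
      simp [circleMap, ← Complex.exp_add]
    have hct : circleMap 0 1 (-θ) = t := by
      rw [htdef, hwdef]
      exact eq_inv_of_mul_eq_one_right hmul
    have habst : ‖t‖ = 1 := by rw [htdef, norm_inv, habsw]; norm_num
    have htB : t ∈ Metric.ball (0 : ℂ) r⁻¹ := hmemB t (le_of_eq habst)
    have ht0 : t ≠ 0 := inv_ne_zero hw0
    have htw₀ : t ≠ w₀ := by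
      intro h
      apply hwz₀
      rw [htdef, hw₀def] at h
      exact inv_injective h ▸ rfl
    have htinv : t⁻¹ = w := by rw [htdef, inv_inv]
    have hΨt : Ψext t = Ψ w := by rw [hΨext_eq t htB ht0, htinv]
    have hgt : gext t = g w := by rw [hgext_eq t htB ht0, htinv]
    -- unfold both sides
    simp only [hbdef]
    rw [hct]
    rw [hG1 z₀ w hz₀r hwr (Ne.symm hwz₀)]
    funext i
    simp only [Pi.smul_apply, smul_eq_mul, hHdef]
    rw [Matrix.smul_mulVec]
    simp only [Pi.smul_apply, smul_eq_mul]
    -- compute the dslopes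
    have hds1 : ∀ j, dslope (fun s => M s i j) w₀ t = (t - w₀)⁻¹ * M t i j := by
      intro j
      rw [dslope_of_ne _ htw₀, slope_def_field, hMw₀]
      simp [div_eq_inv_mul]
    have hds2 : ∀ j, dslope (fun s => gext s j) 0 t = t⁻¹ * g w j := by
      intro j
      rw [dslope_of_ne _ ht0, slope_def_field, hgext0, hgt]
      simp [div_eq_inv_mul]
    simp only [hds1, hds2]
    have hMt : M t = Ψ z₀ * (Ψ w)⁻¹ - 1 := by rw [hMdef]; simp only [hΨt]
    rw [hMt]
    -- now a scalar computation
    have hsum : ∀ (c : ℂ), ∑ j, c * ((Ψ z₀ * (Ψ w)⁻¹ - 1) i j) * (t⁻¹ * g w j)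
        = (c * t⁻¹) * ∑ j, (Ψ z₀ * (Ψ w)⁻¹ - 1) i j * g w j := by
      intro c
      rw [Finset.mul_sum]
      congr 1
      funext j
      ring
    have hmv : ((Ψ z₀ * (Ψ w)⁻¹ - 1).mulVec (g w)) i
        = ∑ j, (Ψ z₀ * (Ψ w)⁻¹ - 1) i j * g w j := by
      simp [Matrix.mulVec, dotProduct]
    rw [hmv]
    have hfactor : w * I * ((z₀ - w)⁻¹ * ∑ j, (Ψ z₀ * (Ψ w)⁻¹ - 1) i j * g w j)
        = (t * I) * (z₀⁻¹ * (((t - w₀)⁻¹ * t⁻¹)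
            * ∑ j, (Ψ z₀ * (Ψ w)⁻¹ - 1) i j * g w j)) := by
      have hzw : z₀ - w ≠ 0 := sub_ne_zero.mpr (Ne.symm hwz₀)
      have htw : t - w₀ ≠ 0 := sub_ne_zero.mpr htw₀
      have hscal : w * (z₀ - w)⁻¹ = t * z₀⁻¹ * ((t - w₀)⁻¹ * t⁻¹) := by
        rw [htdef, hw₀def]
        field_simp
      calc w * I * ((z₀ - w)⁻¹ * ∑ j, (Ψ z₀ * (Ψ w)⁻¹ - 1) i j * g w j)
          = (w * (z₀ - w)⁻¹) * I * ∑ j, (Ψ z₀ * (Ψ w)⁻¹ - 1) i j * g w j := by ring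
        _ = (t * z₀⁻¹ * ((t - w₀)⁻¹ * t⁻¹)) * I
            * ∑ j, (Ψ z₀ * (Ψ w)⁻¹ - 1) i j * g w j := by rw [hscal]
        _ = _ := by ring
    calc w * I * ((z₀ - w)⁻¹ * ∑ j, (Ψ z₀ * (Ψ w)⁻¹ - 1) i j * g w j)
        = (t * I) * (z₀⁻¹ * (((t - w₀)⁻¹ * t⁻¹)
            * ∑ j, (Ψ z₀ * (Ψ w)⁻¹ - 1) i j * g w j)) := hfactor
      _ = (t * I) * (z₀⁻¹ * ∑ j, ((t - w₀)⁻¹ * ((Ψ z₀ * (Ψ w)⁻¹ - 1) i j))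
            * (t⁻¹ * g w j)) := by
          congr 2
          rw [Finset.mul_sum]
          congr 1
          funext j
          ring
  rw [key]
  rw [intervalIntegral.integral_comp_neg]
  have hfin : ∫ x in (-(2*Real.pi))..(0:ℝ), b x = ∫ x in (0:ℝ)..(2*Real.pi), b x := by
    simpa using hper.intervalIntegral_add_eq (-(2*Real.pi)) 0
  simp only [neg_zero]
  exact hfin
end

section
/- Let Ψ₊, Ψ₋, Φ₊, Φ₋ be functions of two complex variables (t, z) on an open set W ⊆ ℂ², taking values in invertible N×N complex matrices, differentiable in t and in z, and satisfying Ψ₋(t,z)·Φ₊(t,z) = Ψ₊(t,z)·Φ₋(t,z) on W. Set J := Ψ₋⁻¹·Ψ₊. Then at every point of W: Tr[ J⁻¹·∂ₜJ·( ∂_zΦ₋·Φ₋⁻¹ + Ψ₊⁻¹·∂_zΨ₊ ) ] = Tr[ Ψ₊⁻¹·∂ₜΨ₊·( ∂_zΦ₋·Φ₋⁻¹ + Ψ₊⁻¹·∂_zΨ₊ ) ] − Tr[ Ψ₋⁻¹·∂ₜΨ₋·( Ψ₋⁻¹·∂_zΨ₋ + ∂_zΦ₊·Φ₊⁻¹ )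 ]. -/
open Matrix Filter

/-- Entrywise derivative of a matrix-valued function. -/
private noncomputable def Dmat {N : ℕ} (f : ℂ → Matrix (Fin N) (Fin N) ℂ) (t : ℂ) :
    Matrix (Fin N) (Fin N) ℂ :=
  Matrix.of fun i j => deriv (fun s => f s i j) t

private lemma deriv_matrix_mul {N : ℕ} (f g : ℂ → Matrix (Fin N) (Fin N) ℂ) (t : ℂ)
    (hf : ∀ i j, DifferentiableAt ℂ (fun s => f s i j) t)
    (hg : ∀ i j, DifferentiableAt ℂ (fun s => g s i j) t) :
    (Matrix.of fun i j => deriv (fun s => (f s * g s) i j) t)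
      = Dmat f t * g t + f t * Dmat g t := by
  ext i j
  have h1 : (fun s => (f s * g s) i j) = fun s => ∑ k, f s i k * g s k j := by
    funext s; simp [Matrix.mul_apply]
  have h2 : ∀ k : Fin N, deriv (fun s => f s i k * g s k j) t
      = deriv (fun s => f s i k) t * g t k j + f t i k * deriv (fun s => g s k j) t :=
    fun k => deriv_fun_mul (hf i k) (hg k j)
  rw [Matrix.of_apply, h1, deriv_fun_sum (A := fun k s => f s i k * g s k j) (fun k _ => ((hf i k).mul (hg k j)))]
  simp only [h2, Matrix.add_apply, Matrix.mul_apply, Dmat, Matrix.of_apply,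
    Finset.sum_add_distrib]

private lemma diffAt_det {N : ℕ} (f : ℂ → Matrix (Fin N) (Fin N) ℂ) (t : ℂ)
    (hf : ∀ i j, DifferentiableAt ℂ (fun s => f s i j) t) :
    DifferentiableAt ℂ (fun s => (f s).det) t := by
  have h : (fun s => (f s).det) = fun s => ∑ σ : Equiv.Perm (Fin N),
      ((Equiv.Perm.sign σ : ℤ) : ℂ) * ∏ i, f s (σ i) i := by
    funext s; rw [Matrix.det_apply]
    congr 1; funext σ
    simp [Units.smul_def, zsmul_eq_mul]
  rw [h]
  exact DifferentiableAt.fun_sum fun σ _ =>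
    ((DifferentiableAt.fun_finsetProd (fun i _ => hf (σ i) i)).const_mul _)

private lemma diffAt_adj {N : ℕ} (f : ℂ → Matrix (Fin N) (Fin N) ℂ) (t : ℂ)
    (hf : ∀ i j, DifferentiableAt ℂ (fun s => f s i j) t) (i j : Fin N) :
    DifferentiableAt ℂ (fun s => (f s).adjugate i j) t := by
  simp only [Matrix.adjugate_apply]
  apply diffAt_det (fun s => (f s).updateRow j (Pi.single i 1)) t
  intro k l
  by_cases h : k = j
  · simp only [Matrix.updateRow_apply, h, if_true]
    exact differentiableAt_const _
  · simp only [Matrix.updateRow_apply, h, if_false]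
    exact hf k l

private lemma diffAt_inv_entry {N : ℕ} (f : ℂ → Matrix (Fin N) (Fin N) ℂ) (t : ℂ)
    (hf : ∀ i j, DifferentiableAt ℂ (fun s => f s i j) t)
    (hdet : (f t).det ≠ 0) (i j : Fin N) :
    DifferentiableAt ℂ (fun s => (f s)⁻¹ i j) t := by
  have he : (fun s => (f s)⁻¹ i j) = fun s => ((f s).det)⁻¹ * (f s).adjugate i j := by
    funext s
    rw [Matrix.inv_def, Matrix.smul_apply, Ring.inverse_eq_inv, smul_eq_mul]
  rw [he]
  exact ((diffAt_det f t hf).inv hdet).mul (diffAt_adj f t hf i j)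

private lemma deriv_inv_matrix {N : ℕ} (f : ℂ → Matrix (Fin N) (Fin N) ℂ) (t : ℂ)
    (hf : ∀ i j, DifferentiableAt ℂ (fun s => f s i j) t)
    (hu : IsUnit (f t)) :
    Dmat (fun s => (f s)⁻¹) t = -((f t)⁻¹ * Dmat f t * (f t)⁻¹) := by
  have hd : IsUnit (f t).det := (Matrix.isUnit_iff_isUnit_det _).mp hu
  have hd0 : (f t).det ≠ 0 := hd.ne_zero
  have hinv : ∀ i j, DifferentiableAt ℂ (fun s => (f s)⁻¹ i j) t :=
    diffAt_inv_entry f t hf hd0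
  have hprod := deriv_matrix_mul (fun s => (f s)⁻¹) f t hinv hf
  have hev : ∀ᶠ s in nhds t, (f s).det ≠ 0 :=
    (diffAt_det f t hf).continuousAt.eventually_ne hd0
  have hzero : (Matrix.of fun i j => deriv (fun s => ((f s)⁻¹ * f s) i j) t)
      = (0 : Matrix (Fin N) (Fin N) ℂ) := by
    ext i j
    have heq : (fun s => ((f s)⁻¹ * f s) i j) =ᶠ[nhds t]
        (fun _ => (1 : Matrix (Fin N) (Fin N) ℂ) i j) := by
      filter_upwards [hev] with s hs
      rw [Matrix.nonsing_inv_mul (f s) (isUnit_iff_ne_zero.mpr hs)]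
    rw [Matrix.of_apply, heq.deriv_eq, deriv_const]
    simp
  rw [hzero] at hprod
  have h2 : Dmat (fun s => (f s)⁻¹) t * f t = -((f t)⁻¹ * Dmat f t) := by
    have h3 := hprod.symm
    rw [add_eq_zero_iff_eq_neg] at h3
    exact h3
  calc Dmat (fun s => (f s)⁻¹) t
      = Dmat (fun s => (f s)⁻¹) t * f t * (f t)⁻¹ :=
        (Matrix.mul_nonsing_inv_cancel_right _ _ hd).symm
    _ = -((f t)⁻¹ * Dmat f t * (f t)⁻¹) := by rw [h2, neg_mul]

set_option maxHeartbeats 1000000 in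
private lemma trace_algebra_aux {N : ℕ} (P M Tp Tm A B : Matrix (Fin N) (Fin N) ℂ)
    (hPd : IsUnit P.det) (hMd : IsUnit M.det)
    (key2 : M⁻¹ * P * A = B * (M⁻¹ * P)) :
    Matrix.trace ((M⁻¹ * P)⁻¹ * (-(M⁻¹ * Tm * M⁻¹) * P + M⁻¹ * Tp) * A)
    = Matrix.trace (P⁻¹ * Tp * A) - Matrix.trace (M⁻¹ * Tm * B) := by
  have hPl : ∀ X : Matrix (Fin N) (Fin N) ℂ, P * (P⁻¹ * X) = X :=
    fun X => Matrix.mul_nonsing_inv_cancel_left P X hPd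
  have hMl : ∀ X : Matrix (Fin N) (Fin N) ℂ, M * (M⁻¹ * X) = X :=
    fun X => Matrix.mul_nonsing_inv_cancel_left M X hMd
  have hJ : (M⁻¹ * P)⁻¹ = P⁻¹ * M := by
    rw [Matrix.mul_inv_rev, Matrix.nonsing_inv_nonsing_inv M hMd]
  have h5 : P⁻¹ * M * (-(M⁻¹ * Tm * M⁻¹) * P + M⁻¹ * Tp)
      = P⁻¹ * Tp - P⁻¹ * Tm * (M⁻¹ * P) := by
    simp only [Matrix.mul_add, mul_neg, neg_mul, Matrix.mul_assoc, hMl, sub_eq_add_neg]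
    rw [add_comm]
  have expand : (M⁻¹ * P)⁻¹ * (-(M⁻¹ * Tm * M⁻¹) * P + M⁻¹ * Tp) * A
      = P⁻¹ * Tp * A - P⁻¹ * Tm * (M⁻¹ * P * A) := by
    rw [hJ, h5]
    simp only [Matrix.sub_mul, Matrix.mul_assoc]
  rw [expand, Matrix.trace_sub]
  congr 1
  rw [key2, ← Matrix.mul_assoc (P⁻¹ * Tm) B (M⁻¹ * P),
    Matrix.trace_mul_comm (P⁻¹ * Tm * B) (M⁻¹ * P)]
  congr 1
  calc M⁻¹ * P * (P⁻¹ * Tm * B) = M⁻¹ * (P * (P⁻¹ * (Tm * B))) := by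
        simp only [Matrix.mul_assoc]
    _ = M⁻¹ * (Tm * B) := by rw [hPl]
    _ = M⁻¹ * Tm * B := by rw [Matrix.mul_assoc]

set_option maxHeartbeats 1000000 in
private lemma trace_algebra {N : ℕ} (P M Fp Fm Tp Tm Zp Zm ZFp ZFm : Matrix (Fin N) (Fin N) ℂ)
    (hP : IsUnit P) (hM : IsUnit M) (hFp : IsUnit Fp) (hFm : IsUnit Fm)
    (hrel : M * Fp = P * Fm)
    (hz : Zm * Fp + M * ZFp = Zp * Fm + P * ZFm) :
    Matrix.trace ((M⁻¹ * P)⁻¹ * (-(M⁻¹ * Tm * M⁻¹) * P + M⁻¹ * Tp) *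
      (ZFm * Fm⁻¹ + P⁻¹ * Zp))
    = Matrix.trace (P⁻¹ * Tp * (ZFm * Fm⁻¹ + P⁻¹ * Zp))
      - Matrix.trace (M⁻¹ * Tm * (M⁻¹ * Zm + ZFp * Fp⁻¹)) := by
  have hPd : IsUnit P.det := (Matrix.isUnit_iff_isUnit_det _).mp hP
  have hMd : IsUnit M.det := (Matrix.isUnit_iff_isUnit_det _).mp hM
  have hFpd : IsUnit Fp.det := (Matrix.isUnit_iff_isUnit_det _).mp hFp
  have hFmd : IsUnit Fm.det := (Matrix.isUnit_iff_isUnit_det _).mp hFm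
  apply trace_algebra_aux _ _ _ _ _ _ hPd hMd
  have hPl : ∀ X : Matrix (Fin N) (Fin N) ℂ, P * (P⁻¹ * X) = X :=
    fun X => Matrix.mul_nonsing_inv_cancel_left P X hPd
  have hMl : ∀ X : Matrix (Fin N) (Fin N) ℂ, M * (M⁻¹ * X) = X :=
    fun X => Matrix.mul_nonsing_inv_cancel_left M X hMd
  have hMl' : ∀ X : Matrix (Fin N) (Fin N) ℂ, M⁻¹ * (M * X) = X :=
    fun X => Matrix.nonsing_inv_mul_cancel_left M X hMd
  have hFm1 : Fm⁻¹ * Fm = 1 := Matrix.nonsing_inv_mul Fm hFmd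
  have hFm1' : Fm * Fm⁻¹ = 1 := Matrix.mul_nonsing_inv Fm hFmd
  have hFp1 : Fp⁻¹ * Fp = 1 := Matrix.nonsing_inv_mul Fp hFpd
  have key1 : P * (ZFm * Fm⁻¹ + P⁻¹ * Zp) * Fm = M * (M⁻¹ * Zm + ZFp * Fp⁻¹) * Fp := by
    simp only [Matrix.mul_add, Matrix.add_mul, Matrix.mul_assoc, hFm1, hFp1, mul_one,
      hPl, hMl]
    rw [hz]
    exact add_comm _ _
  have hFpFm : Fp * Fm⁻¹ = M⁻¹ * P := by
    have h3 : Fp = M⁻¹ * (P * Fm) := by rw [← hrel]; exact (hMl' Fp).symm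
    rw [h3]
    simp only [Matrix.mul_assoc, hFm1', mul_one]
  have h4 : P * (ZFm * Fm⁻¹ + P⁻¹ * Zp) = M * (M⁻¹ * Zm + ZFp * Fp⁻¹) * (Fp * Fm⁻¹) := by
    calc P * (ZFm * Fm⁻¹ + P⁻¹ * Zp)
        = P * (ZFm * Fm⁻¹ + P⁻¹ * Zp) * Fm * Fm⁻¹ :=
          (Matrix.mul_nonsing_inv_cancel_right _ _ hFmd).symm
      _ = M * (M⁻¹ * Zm + ZFp * Fp⁻¹) * Fp * Fm⁻¹ := by rw [key1]
      _ = M * (M⁻¹ * Zm + ZFp * Fp⁻¹) * (Fp * Fm⁻¹) := by rw [Matrix.mul_assoc]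
  rw [hFpFm] at h4
  calc M⁻¹ * P * (ZFm * Fm⁻¹ + P⁻¹ * Zp)
      = M⁻¹ * (P * (ZFm * Fm⁻¹ + P⁻¹ * Zp)) := Matrix.mul_assoc _ _ _
    _ = M⁻¹ * (M * ((M⁻¹ * Zm + ZFp * Fp⁻¹) * (M⁻¹ * P))) := by
        rw [h4, Matrix.mul_assoc]
    _ = (M⁻¹ * Zm + ZFp * Fp⁻¹) * (M⁻¹ * P) := hMl' _

/-- Pointwise matrix-calculus identity underlying the differentiation formula for the
tau function: if `Ψ₋ Φ₊ = Ψ₊ Φ₋` on an open set `W ⊆ ℂ²`, all four matrix functions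
being invertible and differentiable in each variable, then with `J = Ψ₋⁻¹ Ψ₊`,
`Tr[J⁻¹ ∂ₜJ (∂_zΦ₋ Φ₋⁻¹ + Ψ₊⁻¹ ∂_zΨ₊)] = Tr[Ψ₊⁻¹ ∂ₜΨ₊ (∂_zΦ₋ Φ₋⁻¹ + Ψ₊⁻¹ ∂_zΨ₊)]
  - Tr[Ψ₋⁻¹ ∂ₜΨ₋ (Ψ₋⁻¹ ∂_zΨ₋ + ∂_zΦ₊ Φ₊⁻¹)]`. -/
theorem trace_identity_for_tau_derivative (N : ℕ) (W : Set (ℂ × ℂ)) (hW : IsOpen W)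
    (Ψp Ψm Φp Φm : ℂ → ℂ → Matrix (Fin N) (Fin N) ℂ)
    (hinv : ∀ p ∈ W, IsUnit (Ψp p.1 p.2) ∧ IsUnit (Ψm p.1 p.2) ∧
      IsUnit (Φp p.1 p.2) ∧ IsUnit (Φm p.1 p.2))
    (hdiff_t : ∀ p ∈ W, ∀ i j,
      DifferentiableAt ℂ (fun s => Ψp s p.2 i j) p.1 ∧
      DifferentiableAt ℂ (fun s => Ψm s p.2 i j) p.1 ∧
      DifferentiableAt ℂ (fun s => Φp s p.2 i j) p.1 ∧
      DifferentiableAt ℂ (fun s => Φm s p.2 i j) p.1)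
    (hdiff_z : ∀ p ∈ W, ∀ i j,
      DifferentiableAt ℂ (fun w => Ψp p.1 w i j) p.2 ∧
      DifferentiableAt ℂ (fun w => Ψm p.1 w i j) p.2 ∧
      DifferentiableAt ℂ (fun w => Φp p.1 w i j) p.2 ∧
      DifferentiableAt ℂ (fun w => Φm p.1 w i j) p.2)
    (hrel : ∀ p ∈ W, Ψm p.1 p.2 * Φp p.1 p.2 = Ψp p.1 p.2 * Φm p.1 p.2) :
    ∀ t z : ℂ, (t, z) ∈ W →
      Matrix.trace
        (((Ψm t z)⁻¹ * Ψp t z)⁻¹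
          * (Matrix.of fun i j => deriv (fun s => ((Ψm s z)⁻¹ * Ψp s z) i j) t)
          * ((Matrix.of fun i j => deriv (fun w => Φm t w i j) z) * (Φm t z)⁻¹
              + (Ψp t z)⁻¹ * (Matrix.of fun i j => deriv (fun w => Ψp t w i j) z)))
      = Matrix.trace
          ((Ψp t z)⁻¹ * (Matrix.of fun i j => deriv (fun s => Ψp s z i j) t)
            * ((Matrix.of fun i j => deriv (fun w => Φm t w i j) z) * (Φm t z)⁻¹
                + (Ψp t z)⁻¹ * (Matrix.of fun i j => deriv (fun w => Ψp t w i j) z)))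
        - Matrix.trace
            ((Ψm t z)⁻¹ * (Matrix.of fun i j => deriv (fun s => Ψm s z i j) t)
              * ((Ψm t z)⁻¹ * (Matrix.of fun i j => deriv (fun w => Ψm t w i j) z)
                  + (Matrix.of fun i j => deriv (fun w => Φp t w i j) z) * (Φp t z)⁻¹)) := by
  intro t z hmem
  obtain ⟨hPu, hMu, hFpu, hFmu⟩ := hinv (t, z) hmem
  have hdt := hdiff_t (t, z) hmem
  have hdz := hdiff_z (t, z) hmem
  have hPt : ∀ i j, DifferentiableAt ℂ (fun s => Ψp s z i j) t := fun i j => (hdt i j).1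
  have hMt : ∀ i j, DifferentiableAt ℂ (fun s => Ψm s z i j) t := fun i j => (hdt i j).2.1
  have hPz : ∀ i j, DifferentiableAt ℂ (fun w => Ψp t w i j) z := fun i j => (hdz i j).1
  have hMz : ∀ i j, DifferentiableAt ℂ (fun w => Ψm t w i j) z := fun i j => (hdz i j).2.1
  have hFpz : ∀ i j, DifferentiableAt ℂ (fun w => Φp t w i j) z := fun i j => (hdz i j).2.2.1
  have hFmz : ∀ i j, DifferentiableAt ℂ (fun w => Φm t w i j) z := fun i j => (hdz i j).2.2.2
  -- derivative of J in t
  have hMdet : (Ψm t z).det ≠ 0 := ((Matrix.isUnit_iff_isUnit_det _).mp hMu).ne_zero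
  have hMinv_t : ∀ i j, DifferentiableAt ℂ (fun s => (Ψm s z)⁻¹ i j) t :=
    diffAt_inv_entry (fun s => Ψm s z) t hMt hMdet
  have hDJ : (Matrix.of fun i j => deriv (fun s => ((Ψm s z)⁻¹ * Ψp s z) i j) t)
      = -((Ψm t z)⁻¹ * (Matrix.of fun i j => deriv (fun s => Ψm s z i j) t) * (Ψm t z)⁻¹)
          * Ψp t z
        + (Ψm t z)⁻¹ * (Matrix.of fun i j => deriv (fun s => Ψp s z i j) t) := by
    have hp := deriv_matrix_mul (fun s => (Ψm s z)⁻¹) (fun s => Ψp s z) t hMinv_t hPt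
    rw [hp, deriv_inv_matrix (fun s => Ψm s z) t hMt hMu]
    rfl
  -- derivative of the jump relation in z
  have hev : ∀ᶠ w in nhds z, (t, w) ∈ W := by
    have hc : ContinuousAt (fun w : ℂ => (t, w)) z := continuousAt_const.prodMk continuousAt_id
    exact hc.preimage_mem_nhds (hW.mem_nhds hmem)
  have hzrel : (Matrix.of fun i j => deriv (fun w => Ψm t w i j) z) * Φp t z
        + Ψm t z * (Matrix.of fun i j => deriv (fun w => Φp t w i j) z)
      = (Matrix.of fun i j => deriv (fun w => Ψp t w i j) z) * Φm t z
        + Ψp t z * (Matrix.of fun i j => deriv (fun w => Φm t w i j) z) := by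
    have e1 := deriv_matrix_mul (fun w => Ψm t w) (fun w => Φp t w) z hMz hFpz
    have e2 := deriv_matrix_mul (fun w => Ψp t w) (fun w => Φm t w) z hPz hFmz
    have e1' : (Matrix.of fun i j => deriv (fun w => (Ψm t w * Φp t w) i j) z)
        = (Matrix.of fun i j => deriv (fun w => Ψm t w i j) z) * Φp t z
          + Ψm t z * (Matrix.of fun i j => deriv (fun w => Φp t w i j) z) := e1
    have e2' : (Matrix.of fun i j => deriv (fun w => (Ψp t w * Φm t w) i j) z)
        = (Matrix.of fun i j => deriv (fun w => Ψp t w i j) z) * Φm t z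
          + Ψp t z * (Matrix.of fun i j => deriv (fun w => Φm t w i j) z) := e2
    rw [← e1', ← e2']
    ext i j
    rw [Matrix.of_apply, Matrix.of_apply]
    apply Filter.EventuallyEq.deriv_eq
    filter_upwards [hev] with w hw
    rw [hrel (t, w) hw]
  rw [hDJ]
  exact trace_algebra (Ψp t z) (Ψm t z) (Φp t z) (Φm t z)
    (Matrix.of fun i j => deriv (fun s => Ψp s z i j) t)
    (Matrix.of fun i j => deriv (fun s => Ψm s z i j) t)
    (Matrix.of fun i j => deriv (fun w => Ψp t w i j) z)
    (Matrix.of fun i j => deriv (fun w => Ψm t w i j) z)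
    (Matrix.of fun i j => deriv (fun w => Φp t w i j) z)
    (Matrix.of fun i j => deriv (fun w => Φm t w i j) z)
    hPu hMu hFpu hFmu (hrel (t, z) hmem) hzrel
end

section
/- Let U ⊆ ℂ∖{0} be open, let A, Λ : U → Mat_N(ℂ) be analytic, and let Ψ : U → Mat_N(ℂ) be analytic with invertible values satisfying the linear ODE Ψ'(z) = Ψ(z)·A(z) + z⁻¹·Λ(z)·Ψ(z) on U. Define 𝖺(z, z') := (1 − Ψ(z)·Ψ(z')⁻¹)/(z − z') for z ≠ z' in U. Then for all z ≠ z' in U: z·∂_z𝖺(z,z') + z'·∂_{z'}𝖺(z,z') + 𝖺(z,z') = Ψ(z)·[(z'·A(z') − z·A(z))/(z − z')]·Ψ(z')⁻¹ + Λ(z)·𝖺(z,z') − 𝖺(z,z')·Λ(z') + (Λ(z') − Λ(z))/(z − z'). -/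
attribute [local instance] Matrix.linftyOpNormedAddCommGroup Matrix.linftyOpNormedSpace
  Matrix.linftyOpNormedRing Matrix.linftyOpNormedAlgebra

private theorem hasDerivAt_of_entries {N : ℕ} {F : ℂ → Matrix (Fin N) (Fin N) ℂ}
    {D : Matrix (Fin N) (Fin N) ℂ} {z : ℂ}
    (h : ∀ i j, HasDerivAt (fun w => F w i j) (D i j) z) :
    HasDerivAt F D z := by
  have key : HasDerivAt (fun w => ∑ i : Fin N, ∑ j : Fin N,
      Matrix.single i j (F w i j))
      (∑ i : Fin N, ∑ j : Fin N, Matrix.single i j (D i j)) z := by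
    apply HasDerivAt.fun_sum; intro i _
    apply HasDerivAt.fun_sum; intro j _
    simpa [Matrix.smul_single, smul_eq_mul, mul_one] using
      (h i j).smul_const (Matrix.single i j (1 : ℂ))
  convert key using 1
  · funext w; exact Matrix.matrix_eq_sum_single (F w)
  · exact Matrix.matrix_eq_sum_single D

private theorem entry_hasDerivAt {N : ℕ} {F : ℂ → Matrix (Fin N) (Fin N) ℂ}
    {D : Matrix (Fin N) (Fin N) ℂ} {z : ℂ} (h : HasDerivAt F D z) (i j : Fin N) :
    HasDerivAt (fun w => F w i j) (D i j) z := by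
  let L : Matrix (Fin N) (Fin N) ℂ →ₗ[ℂ] ℂ :=
    { toFun := fun m => m i j, map_add' := fun _ _ => rfl, map_smul' := fun _ _ => rfl }
  exact (L.toContinuousLinearMap.hasFDerivAt.comp_hasDerivAt z h)

private theorem key_algebra {N : ℕ} (P Q C Az Az' Lz Lz' : Matrix (Fin N) (Fin N) ℂ)
    (z z' : ℂ) (hz0 : z ≠ 0) (hz'0 : z' ≠ 0) (hsub : z - z' ≠ 0)
    (hQC : Q * C = 1) (hCQ : C * Q = 1) :
    z • ((z - z')⁻¹ • (-((P * Az + z⁻¹ • (Lz * P)) * C))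
        + (-1 / (z - z') ^ 2) • (1 - P * C))
      + z' • ((z - z')⁻¹ • (-(P * -(C * (Q * Az' + z'⁻¹ • (Lz' * Q)) * C)))
        + (1 / (z - z') ^ 2) • (1 - P * C))
      + (z - z')⁻¹ • (1 - P * C)
    = P * ((z - z')⁻¹ • (z' • Az' - z • Az)) * C
        + Lz * ((z - z')⁻¹ • (1 - P * C)) - ((z - z')⁻¹ • (1 - P * C)) * Lz'
        + (z - z')⁻¹ • (Lz' - Lz) := by
  have h1 : ∀ X : Matrix (Fin N) (Fin N) ℂ, C * (Q * X) = X := fun X => by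
    rw [← mul_assoc, hCQ, one_mul]
  simp only [mul_add, add_mul, mul_sub, sub_mul, smul_sub, smul_add, smul_smul,
    mul_one, one_mul, mul_neg, neg_mul, smul_neg, neg_smul, neg_neg,
    mul_assoc, h1, hQC, smul_mul_assoc, mul_smul_comm]
  match_scalars <;> field_simp <;> ring

/-- Action of the Euler operator `ℒ₀ = z∂_z + z'∂_{z'} + 1` on the Cauchy–Plemelj kernel
`a(z,z') = (1 - Ψ(z)Ψ(z')⁻¹)/(z - z')` when `Ψ` satisfies the linear ODE
`∂_zΨ = Ψ A + z⁻¹ Λ Ψ`. -/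
theorem euler_operator_on_cauchyPlemelj_kernel (N : ℕ) (U : Set ℂ)
    (hU : IsOpen U) (hU0 : (0 : ℂ) ∉ U)
    (A Λm Ψ : ℂ → Matrix (Fin N) (Fin N) ℂ)
    (hA : ∀ i j, AnalyticOnNhd ℂ (fun z => A z i j) U)
    (hΛ : ∀ i j, AnalyticOnNhd ℂ (fun z => Λm z i j) U)
    (hΨ : ∀ i j, AnalyticOnNhd ℂ (fun z => Ψ z i j) U)
    (hinv : ∀ z ∈ U, IsUnit (Ψ z))
    (hODE : ∀ z ∈ U,
      (Matrix.of fun i j => deriv (fun w => Ψ w i j) z) = Ψ z * A z + z⁻¹ • (Λm z * Ψ z))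
    (a : ℂ → ℂ → Matrix (Fin N) (Fin N) ℂ)
    (ha : ∀ z z' : ℂ, z ≠ z' → a z z' = (z - z')⁻¹ • (1 - Ψ z * (Ψ z')⁻¹)) :
    ∀ z ∈ U, ∀ z' ∈ U, z ≠ z' →
      z • (Matrix.of fun i j => deriv (fun w => a w z' i j) z)
        + z' • (Matrix.of fun i j => deriv (fun w => a z w i j) z')
        + a z z'
      = Ψ z * ((z - z')⁻¹ • (z' • A z' - z • A z)) * (Ψ z')⁻¹
          + Λm z * a z z' - a z z' * Λm z'
          + (z - z')⁻¹ • (Λm z' - Λm z) := by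
  intro z hz z' hz' hne
  have hz0 : z ≠ 0 := fun h => hU0 (h ▸ hz)
  have hz'0 : z' ≠ 0 := fun h => hU0 (h ▸ hz')
  have hsub : z - z' ≠ 0 := sub_ne_zero.mpr hne
  set C := (Ψ z')⁻¹ with hC
  have hunit := hinv z' hz'
  have hdet := (Matrix.isUnit_iff_isUnit_det _).mp hunit
  have hQC : Ψ z' * C = 1 := Matrix.mul_nonsing_inv _ hdet
  have hCQ : C * Ψ z' = 1 := Matrix.nonsing_inv_mul _ hdet
  -- derivative of Ψ at points of U
  have hΨd : ∀ w ∈ U, HasDerivAt Ψ (Ψ w * A w + w⁻¹ • (Λm w * Ψ w)) w := by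
    intro w hw
    rw [← hODE w hw]
    exact hasDerivAt_of_entries fun i j => (hΨ i j w hw).differentiableAt.hasDerivAt
  set P' := Ψ z * A z + z⁻¹ • (Λm z * Ψ z) with hP'
  set Q' := Ψ z' * A z' + z'⁻¹ • (Λm z' * Ψ z') with hQ'
  -- derivative of the inverse at z'
  have hinvd : HasDerivAt (fun w => (Ψ w)⁻¹) (-(C * Q' * C)) z' := by
    have h0 : HasFDerivAt Ring.inverse
        (-(ContinuousLinearMap.mulLeftRight ℂ _ C C)) (Ψ z') := by
      have := hasFDerivAt_ringInverse (𝕜 := ℂ) hunit.unit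
      rw [hunit.unit_spec] at this
      rw [Matrix.coe_units_inv, hunit.unit_spec] at this
      exact this
    have h := h0.comp_hasDerivAt z' (hΨd z' hz')
    simp [Function.comp, Matrix.nonsing_inv_eq_ringInverse,
      ContinuousLinearMap.mulLeftRight_apply] at h ⊢
    exact h
  -- derivative in the first variable
  set D1 : Matrix (Fin N) (Fin N) ℂ :=
    (z - z')⁻¹ • (-(P' * C)) + (-1 / (z - z') ^ 2) • (1 - Ψ z * C) with hD1
  have hd1 : HasDerivAt (fun w => a w z') D1 z := by
    have hc : HasDerivAt (fun w : ℂ => (w - z')⁻¹) (-1 / (z - z') ^ 2) z := by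
      simpa using ((hasDerivAt_id z).sub_const z').fun_inv hsub
    have hf : HasDerivAt (fun w => 1 - Ψ w * C) (-(P' * C)) z :=
      (((hΨd z hz).mul_const C).const_sub 1)
    have hF : HasDerivAt (fun w : ℂ => (w - z')⁻¹ • (1 - Ψ w * C)) D1 z := by
      exact hc.fun_smul hf
    apply hF.congr_of_eventuallyEq
    filter_upwards [compl_singleton_mem_nhds hne] with w hw
    exact ha w z' hw
  -- derivative in the second variable
  set D2 : Matrix (Fin N) (Fin N) ℂ :=
    (z - z')⁻¹ • (-(Ψ z * -(C * Q' * C))) + (1 / (z - z') ^ 2) • (1 - Ψ z * C) with hD2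
  have hd2 : HasDerivAt (fun w => a z w) D2 z' := by
    have hc : HasDerivAt (fun w : ℂ => (z - w)⁻¹) (1 / (z - z') ^ 2) z' := by
      have := (((hasDerivAt_id z').const_sub z).fun_inv hsub)
      simpa using this
    have hf : HasDerivAt (fun w => 1 - Ψ z * (Ψ w)⁻¹) (-(Ψ z * -(C * Q' * C))) z' :=
      ((hinvd.const_mul (Ψ z)).const_sub 1)
    have hF : HasDerivAt (fun w : ℂ => (z - w)⁻¹ • (1 - Ψ z * (Ψ w)⁻¹)) D2 z' := by
      exact hc.fun_smul hf
    apply hF.congr_of_eventuallyEq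
    filter_upwards [compl_singleton_mem_nhds hne.symm] with w hw
    exact ha z w (Ne.symm hw)
  have e1 : (Matrix.of fun i j => deriv (fun w => a w z' i j) z) = D1 := by
    ext i j; exact (entry_hasDerivAt hd1 i j).deriv
  have e2 : (Matrix.of fun i j => deriv (fun w => a z w i j) z') = D2 := by
    ext i j; exact (entry_hasDerivAt hd2 i j).deriv
  rw [e1, e2, ha z z' hne, hD1, hD2, hP', hQ']
  exact key_algebra (Ψ z) (Ψ z') C (A z) (A z') (Λm z) (Λm z') z z' hz0 hz'0 hsub hQC hCQ
end

section
/- Let V be a finite-dimensional complex vector space with direct sum decomposition V = V₊ ⊕ V₋, Π the projection onto V₊ along V₋, Π₋ := 1 − Π. Let Ψ₊, Ψ̄₊ be invertible endomorphisms preserving V₊ (both the map and its inverse map V₊ into V₊), Ψ₋, Ψ̄₋ invertible endomorphisms preserving V₋, with Ψ₋⁻¹∘Ψ₊ = Ψ̄₊∘Ψ̄₋⁻¹. Set a := Ψ₊ΠΨ₊⁻¹ − Π, d := Ψ₋Π₋Ψ₋⁻¹ − Π₋, L := a + d, and M := Ψ₊∘Ψ̄₋ (= Ψ₋∘Ψ̄₊).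 Then 1 + L is invertible and the operator K := L∘(1 + L)⁻¹ satisfies: Π∘K∘Π = Π M Π₋ M⁻¹ Π, Π∘K∘Π₋ = −Π M Π₋ M⁻¹ Π₋, Π₋∘K∘Π = −Π₋ M Π M⁻¹ Π, and Π₋∘K∘Π₋ = Π₋ M Π M⁻¹ Π₋. -/
private lemma correlation_kernel_ring_aux {R : Type*} [Ring R]
    (P p pi m mi bp bpi bm bmi A B M W K : R)
    (hPP : P*P = P)
    (hp1 : p*pi = 1) (hp2 : pi*p = 1)
    (hm1 : m*mi = 1) (hm2 : mi*m = 1)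
    (hbp1 : bp*bpi = 1) (hbp2 : bpi*bp = 1)
    (hbm1 : bm*bmi = 1) (hbm2 : bmi*bm = 1)
    (u1 : (1-P)*(p*P) = 0) (u2 : (1-P)*(pi*P) = 0)
    (u3 : (1-P)*(bp*P) = 0) (u4 : (1-P)*(bpi*P) = 0)
    (l1 : P*(m*(1-P)) = 0) (l2 : P*(mi*(1-P)) = 0)
    (l3 : P*(bm*(1-P)) = 0) (l4 : P*(bmi*(1-P)) = 0)
    (hfact : mi*p = bp*bmi)
    (hA : A = p*(P*pi)) (hB : B = m*((1-P)*mi))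
    (hM : M = p*bm) (hW : W = bmi*pi)
    (hK : K = (P*M - M*P)*(W*(P - (1-P)))) :
    (A+B)*(1-K) = 1 ∧ (1-K)*(A+B) = 1 ∧
    P*K*P = P*M*(1-P)*W*P ∧
    P*K*(1-P) = -(P*M*(1-P)*W*(1-P)) ∧
    (1-P)*K*P = -((1-P)*M*P*W*P) ∧
    (1-P)*K*(1-P) = (1-P)*M*P*W*(1-P) := by
  -- basic projection facts
  have hPQ0 : P*(1-P) = 0 := by rw [mul_sub, mul_one, hPP, sub_self]
  have hQP0 : (1-P)*P = 0 := by rw [sub_mul, one_mul, hPP, sub_self]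
  have h11 : (1-P)*(1-P) = 1-P := by
    have e : (1-P)*(1-P) = (1 - 2*P) + P*P := by noncomm_ring
    rw [e, hPP]; noncomm_ring
  -- relations for A
  have u2' : P*(pi*P) = pi*P := by
    have h := u2; rw [sub_mul, one_mul, sub_eq_zero] at h; exact h.symm
  have hAP : A*P = P := by
    rw [hA]
    have e : p*(P*pi)*P = p*(P*(pi*P)) := by noncomm_ring
    rw [e, u2', ← mul_assoc, hp1, one_mul]
  have hQA : (1-P)*A = 0 := by
    rw [hA]
    have e : (1-P)*(p*(P*pi)) = ((1-P)*(p*P))*pi := by noncomm_ring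
    rw [e, u1, zero_mul]
  have hPA : P*A = A := by
    have h := hQA; rw [sub_mul, one_mul, sub_eq_zero] at h; exact h.symm
  have hAQ : A*(1-P) = A - P := by rw [mul_sub, mul_one, hAP]
  -- relations for B
  have l2' : (1-P)*(mi*(1-P)) = mi*(1-P) := by
    rw [sub_mul, one_mul, l2, sub_zero]
  have hBQ : B*(1-P) = 1-P := by
    rw [hB]
    have e : (m*((1-P)*mi))*(1-P) = m*((1-P)*(mi*(1-P))) := by noncomm_ring
    rw [e, l2', ← mul_assoc, hm1, one_mul]
  have hPB : P*B = 0 := by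
    rw [hB]
    have e : P*(m*((1-P)*mi)) = (P*(m*(1-P)))*mi := by noncomm_ring
    rw [e, l1, zero_mul]
  have hQB : (1-P)*B = B := by rw [sub_mul, one_mul, hPB, sub_zero]
  have hBP : B*P = B - (1-P) := by
    have e : B*P = B - B*(1-P) := by noncomm_ring
    rw [e, hBQ]
  -- M and W
  have hMW : M*W = 1 := by
    rw [hM, hW]
    have e : (p*bm)*(bmi*pi) = p*((bm*bmi)*pi) := by noncomm_ring
    rw [e, hbm1, one_mul, hp1]
  have hAM : A*M = p*(P*bm) := by
    rw [hA, hM]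
    have e : (p*(P*pi))*(p*bm) = p*((P*(pi*p))*bm) := by noncomm_ring
    rw [e, hp2, mul_one]
  have hAMQ : (A*M)*(1-P) = 0 := by
    rw [hAM]
    have e : (p*(P*bm))*(1-P) = p*(P*(bm*(1-P))) := by noncomm_ring
    rw [e, l3, mul_zero]
  have hAMP : A*M*P = A*M := by
    have e : A*M*P = A*M - (A*M)*(1-P) := by noncomm_ring
    rw [e, hAMQ, sub_zero]
  have hBM : B*M = m*((1-P)*bp) := by
    rw [hB, hM]
    have e : (m*((1-P)*mi))*(p*bm) = m*(((1-P)*(mi*p))*bm) := by noncomm_ring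
    rw [e, hfact]
    have e2 : m*(((1-P)*(bp*bmi))*bm) = m*((1-P)*(bp*(bmi*bm))) := by noncomm_ring
    rw [e2, hbm2, mul_one]
  have hBMP : B*M*P = 0 := by
    rw [hBM]
    have e : (m*((1-P)*bp))*P = m*((1-P)*(bp*P)) := by noncomm_ring
    rw [e, u3, mul_zero]
  -- W relations
  have hWA : W*A = bmi*(P*pi) := by
    rw [hW, hA]
    have e : (bmi*pi)*(p*(P*pi)) = bmi*((pi*p)*(P*pi)) := by noncomm_ring
    rw [e, hp2, one_mul]
  have hfact2 : pi*m = bm*bpi := by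
    have e1 : m*(bp*bmi) = p := by rw [← hfact, ← mul_assoc, hm1, one_mul]
    have e3 : (m*(bp*bmi))*(bm*bpi) = m := by
      have e4 : (m*(bp*bmi))*(bm*bpi) = m*(bp*((bmi*bm)*bpi)) := by noncomm_ring
      rw [e4, hbm2, one_mul, hbp1, mul_one]
    have e2 : m = p*(bm*bpi) := by rw [← e3, e1]
    rw [e2, ← mul_assoc, hp2, one_mul]
  have hWB : W*B = bpi*((1-P)*mi) := by
    rw [hW, hB]
    have e : (bmi*pi)*(m*((1-P)*mi)) = bmi*((pi*m)*((1-P)*mi)) := by noncomm_ring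
    rw [e, hfact2]
    have e2 : bmi*((bm*bpi)*((1-P)*mi)) = (bmi*bm)*(bpi*((1-P)*mi)) := by noncomm_ring
    rw [e2, hbm2, one_mul]
  have l4' : P*(bmi*P) = P*bmi := by
    have h := l4; rw [mul_sub, mul_sub, mul_one, sub_eq_zero] at h; exact h.symm
  have hPWA : P*(W*A) = P*W := by
    rw [hWA]
    have e : P*(bmi*(P*pi)) = (P*(bmi*P))*pi := by noncomm_ring
    rw [e, l4', hW, mul_assoc]
  have q_bpi : (1-P)*(bpi*(1-P)) = (1-P)*bpi := by
    rw [mul_sub, mul_sub, mul_one, u4, sub_zero]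
  have e4bpi : bpi*mi = bmi*pi := by
    have e3 : mi = bp*(bmi*pi) := by
      have h1 : mi = (mi*p)*pi := by rw [mul_assoc, hp1, mul_one]
      rw [h1, hfact, mul_assoc]
    rw [e3, ← mul_assoc, hbp2, one_mul]
  have hQWB : (1-P)*(W*B) = (1-P)*W := by
    rw [hWB]
    have e : (1-P)*(bpi*((1-P)*mi)) = ((1-P)*(bpi*(1-P)))*mi := by noncomm_ring
    rw [e, q_bpi, mul_assoc, e4bpi, hW]
  -- first key identity : (A+B)*K = A+B-1
  have key1 : (A+B)*K = A+B-1 := by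
    have s1 : (A+B)*K = ((A*P)*M)*(W*(P-(1-P))) + ((B*P)*M)*(W*(P-(1-P)))
        - (((A*M)*P)*(W*(P-(1-P))) + ((B*M)*P)*(W*(P-(1-P)))) := by
      rw [hK]; noncomm_ring
    rw [hAP, hBP, hAMP, hBMP] at s1
    have s2 : (P*M)*(W*(P-(1-P))) + ((B - (1-P))*M)*(W*(P-(1-P)))
        - ((A*M)*(W*(P-(1-P))) + 0*(W*(P-(1-P))))
        = (P*(M*W))*(P-(1-P)) + ((B - (1-P))*(M*W))*(P-(1-P))
          - (A*(M*W))*(P-(1-P)) := by noncomm_ring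
    rw [s2, hMW] at s1
    have s3 : (P*1)*(P-(1-P)) + ((B - (1-P))*1)*(P-(1-P)) - (A*1)*(P-(1-P))
        = (P*P - P*(1-P)) + (B*P - B*(1-P) - ((1-P)*P - (1-P)*(1-P)))
          - (A*P - A*(1-P)) := by noncomm_ring
    rw [s3, hPP, hPQ0, hBP, hBQ, hQP0, h11, hAP, hAQ] at s1
    rw [s1]; noncomm_ring
  -- second key identity : K*(A+B) = A+B-1
  have key2 : K*(A+B) = A+B-1 := by
    have t1 : K*(A+B) = (P*M - M*P)*(W*((P*A + P*B) - ((1-P)*A + (1-P)*B))) := by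
      rw [hK]; noncomm_ring
    rw [hPA, hPB, hQA, hQB] at t1
    have t2 : (P*M - M*P)*(W*((A + 0) - (0 + B)))
        = (P*((M*W)*A) - P*((M*W)*B)) - (M*(P*(W*A)) - M*(P*(W*B))) := by
      noncomm_ring
    rw [t2, hMW, hPWA] at t1
    have hMX : M*(P*W) - M*(P*(W*B)) = 1 - B := by
      have h : W*B - P*(W*B) = W - P*W := by
        have h0 := hQWB
        rw [sub_mul, one_mul, sub_mul, one_mul] at h0
        exact h0
      have e : M*(P*W) - M*(P*(W*B)) = M*(P*W - P*(W*B)) := by noncomm_ring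
      have e2 : P*W - P*(W*B) = W - W*B := by
        have h' : P*W - P*(W*B) = (W - W*B) + ((W*B - P*(W*B)) - (W - P*W)) := by
          abel
        rw [h, sub_self, add_zero] at h'
        exact h'
      rw [e, e2]
      have e4 : M*(W - W*B) = M*W - (M*W)*B := by noncomm_ring
      rw [e4, hMW, one_mul]
    rw [hMX] at t1
    rw [one_mul, one_mul, hPA, hPB] at t1
    rw [t1]; noncomm_ring
  refine ⟨?_, ?_, ?_, ?_, ?_, ?_⟩
  · have e : (A+B)*(1-K) = (A+B) - (A+B)*K := by noncomm_ring
    rw [e, key1]; noncomm_ring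
  · have e : (1-K)*(A+B) = (A+B) - K*(A+B) := by noncomm_ring
    rw [e, key2]; noncomm_ring
  · have e1 : P*K*P = ((P*P)*M - (P*M)*P)*(W*(2*(P*P) - P)) := by
      rw [hK]; noncomm_ring
    rw [e1, hPP]; noncomm_ring
  · have e1 : P*K*(1-P) = ((P*P)*M - (P*M)*P)*(W*(3*P - 2*(P*P) - 1)) := by
      rw [hK]; noncomm_ring
    rw [e1, hPP]; noncomm_ring
  · have e1 : (1-P)*K*P = ((P*M - M*P) - ((P*P)*M - (P*M)*P))*(W*(2*(P*P) - P)) := by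
      rw [hK]; noncomm_ring
    rw [e1, hPP]; noncomm_ring
  · have e1 : (1-P)*K*(1-P)
        = ((P*M - M*P) - ((P*P)*M - (P*M)*P))*(W*(3*P - 2*(P*P) - 1)) := by
      rw [hK]; noncomm_ring
    rw [e1, hPP]; noncomm_ring

/-- Finite-dimensional form of the correlation-kernel formula `K = L(1+L)⁻¹` expressed
via the solutions `Ψ₊`, `Ψ̄₋` of the direct and dual Riemann–Hilbert problems:
with `M = Ψ₊ ∘ Ψ̄₋`, the operator `1 + L` is invertible and the four blocks of
`K = L(1+L)⁻¹` are `±Π_± M Π_∓ M⁻¹ Π_±` as stated. -/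
theorem correlation_kernel_blocks
    (V : Type) [AddCommGroup V] [Module ℂ V] [FiniteDimensional ℂ V]
    (Vp Vm : Submodule ℂ V) (hc : IsCompl Vp Vm)
    (Ψp Ψm Ψbp Ψbm : V ≃ₗ[ℂ] V)
    (hp : ∀ x ∈ Vp, Ψp x ∈ Vp) (hp' : ∀ x ∈ Vp, Ψp.symm x ∈ Vp)
    (hbp : ∀ x ∈ Vp, Ψbp x ∈ Vp) (hbp' : ∀ x ∈ Vp, Ψbp.symm x ∈ Vp)
    (hm : ∀ x ∈ Vm, Ψm x ∈ Vm) (hm' : ∀ x ∈ Vm, Ψm.symm x ∈ Vm)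
    (hbm : ∀ x ∈ Vm, Ψbm x ∈ Vm) (hbm' : ∀ x ∈ Vm, Ψbm.symm x ∈ Vm)
    (hfact : Ψm.symm.toLinearMap ∘ₗ Ψp.toLinearMap
      = Ψbp.toLinearMap ∘ₗ Ψbm.symm.toLinearMap)
    (P a d L M Minv : Module.End ℂ V)
    (hP : P = Vp.subtype ∘ₗ Vp.linearProjOfIsCompl Vm hc)
    (ha : a = Ψp.toLinearMap ∘ₗ P ∘ₗ Ψp.symm.toLinearMap - P)
    (hd : d = Ψm.toLinearMap ∘ₗ (1 - P : Module.End ℂ V) ∘ₗ Ψm.symm.toLinearMap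
      - (1 - P : Module.End ℂ V))
    (hL : L = a + d)
    (hM : M = Ψp.toLinearMap ∘ₗ Ψbm.toLinearMap)
    (hMinv : Minv = Ψbm.symm.toLinearMap ∘ₗ Ψp.symm.toLinearMap) :
    IsUnit (1 + L) ∧
    P * (L * Ring.inverse (1 + L)) * P = P * M * (1 - P) * Minv * P ∧
    P * (L * Ring.inverse (1 + L)) * (1 - P) = -(P * M * (1 - P) * Minv * (1 - P)) ∧
    (1 - P) * (L * Ring.inverse (1 + L)) * P = -((1 - P) * M * P * Minv * P) ∧
    (1 - P) * (L * Ring.inverse (1 + L)) * (1 - P) = (1 - P) * M * P * Minv * (1 - P) := by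
  -- pointwise facts about the projection P
  have memP : ∀ x : V, P x ∈ Vp := by
    intro x
    rw [hP]
    exact Submodule.coe_mem _
  have idP : ∀ x ∈ Vp, P x = x := by
    intro x hx
    rw [hP]
    simp only [LinearMap.comp_apply, Submodule.subtype_apply]
    exact congrArg _ (Submodule.linearProjOfIsCompl_apply_left hc ⟨x, hx⟩)
  have zeroP : ∀ x ∈ Vm, P x = 0 := by
    intro x hx
    rw [hP]
    simp only [LinearMap.comp_apply, Submodule.subtype_apply]
    rw [show Vp.linearProjOfIsCompl Vm hc x = 0 from Submodule.projectionOnto_apply_of_mem_right hc hx]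
    rfl
  have memQ : ∀ x : V, x - P x ∈ Vm := by
    intro x
    have h := Submodule.projection_add_projection_eq_self hc x
    have hPx : P x = (Vp.linearProjOfIsCompl Vm hc x : V) := by rw [hP]; rfl
    have e : x - (Vp.linearProjOfIsCompl Vm hc x : V)
        = (Vm.linearProjOfIsCompl Vp hc.symm x : V) := by
      rw [sub_eq_iff_eq_add, add_comm]
      exact h.symm
    rw [hPx, e]
    exact Submodule.coe_mem _
  have hPP : P * P = P := by
    apply LinearMap.ext
    intro x
    rw [Module.End.mul_apply]
    exact idP _ (memP x)
  -- upper / lower triangularity lemmas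
  have upper : ∀ f : Module.End ℂ V, (∀ x ∈ Vp, f x ∈ Vp) → (1-P)*(f*P) = 0 := by
    intro f hf
    apply LinearMap.ext
    intro x
    simp only [Module.End.mul_apply, LinearMap.sub_apply, Module.End.one_apply,
      LinearMap.zero_apply]
    rw [idP _ (hf _ (memP x)), sub_self]
  have lower : ∀ g : Module.End ℂ V, (∀ x ∈ Vm, g x ∈ Vm) → P*(g*(1-P)) = 0 := by
    intro g hg
    apply LinearMap.ext
    intro x
    simp only [Module.End.mul_apply, LinearMap.sub_apply, Module.End.one_apply,
      LinearMap.zero_apply]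
    exact zeroP _ (hg _ (memQ x))
  -- ring elements
  set p := Ψp.toLinearMap with hpdef
  set pi := Ψp.symm.toLinearMap with hpidef
  set m := Ψm.toLinearMap with hmdef
  set mi := Ψm.symm.toLinearMap with hmidef
  set bp := Ψbp.toLinearMap with hbpdef
  set bpi := Ψbp.symm.toLinearMap with hbpidef
  set bm := Ψbm.toLinearMap with hbmdef
  set bmi := Ψbm.symm.toLinearMap with hbmidef
  have hp1 : p * pi = 1 := by ext x; exact Ψp.apply_symm_apply x
  have hp2 : pi * p = 1 := by ext x; exact Ψp.symm_apply_apply x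
  have hm1 : m * mi = 1 := by ext x; exact Ψm.apply_symm_apply x
  have hm2 : mi * m = 1 := by ext x; exact Ψm.symm_apply_apply x
  have hbp1 : bp * bpi = 1 := by ext x; exact Ψbp.apply_symm_apply x
  have hbp2 : bpi * bp = 1 := by ext x; exact Ψbp.symm_apply_apply x
  have hbm1 : bm * bmi = 1 := by ext x; exact Ψbm.apply_symm_apply x
  have hbm2 : bmi * bm = 1 := by ext x; exact Ψbm.symm_apply_apply x
  have u1 : (1-P)*(p*P) = 0 := upper p hp
  have u2 : (1-P)*(pi*P) = 0 := upper pi hp'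
  have u3 : (1-P)*(bp*P) = 0 := upper bp hbp
  have u4 : (1-P)*(bpi*P) = 0 := upper bpi hbp'
  have l1 : P*(m*(1-P)) = 0 := lower m hm
  have l2 : P*(mi*(1-P)) = 0 := lower mi hm'
  have l3 : P*(bm*(1-P)) = 0 := lower bm hbm
  have l4 : P*(bmi*(1-P)) = 0 := lower bmi hbm'
  have hfact' : mi*p = bp*bmi := hfact
  have hM' : M = p*bm := hM
  have hMinv' : Minv = bmi*pi := hMinv
  obtain ⟨c1, c2, c3, c4, c5, c6⟩ :=
    correlation_kernel_ring_aux P p pi m mi bp bpi bm bmi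
      (p*(P*pi)) (m*((1-P)*mi)) M Minv ((P*M - M*P)*(Minv*(P - (1-P))))
      hPP hp1 hp2 hm1 hm2 hbp1 hbp2 hbm1 hbm2 u1 u2 u3 u4 l1 l2 l3 l4
      hfact' rfl rfl hM' hMinv' rfl
  set K := (P*M - M*P)*(Minv*(P - (1-P))) with hKdef
  -- 1 + L = A + B
  have ha' : a = p*(P*pi) - P := ha
  have hd' : d = m*((1-P)*mi) - (1-P) := hd
  have h1L : 1 + L = p*(P*pi) + m*((1-P)*mi) := by
    rw [hL, ha', hd']; noncomm_ring
  have cu1 : (1+L)*(1-K) = 1 := by rw [h1L]; exact c1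
  have cu2 : (1-K)*(1+L) = 1 := by rw [h1L]; exact c2
  have hu : IsUnit (1+L) := ⟨⟨1+L, 1-K, cu1, cu2⟩, rfl⟩
  have hinv : Ring.inverse (1+L) = 1-K :=
    Ring.inverse_unit ⟨1+L, 1-K, cu1, cu2⟩
  have hLK : L * Ring.inverse (1+L) = K := by
    rw [hinv]
    have e : L*(1-K) = (1+L)*(1-K) - (1-K) := by noncomm_ring
    rw [e, cu1]; noncomm_ring
  refine ⟨hu, ?_, ?_, ?_, ?_⟩ <;> rw [hLK]
  exacts [c3, c4, c5, c6]
end
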